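/- arXiv:1904.04411 — 8 statements merged into one kernel-verified Lean document; each statement's English description precedes it below -/
import Mathlib

section
/- If p is a prime with p ≡ 1 (mod 4), then the fundamental unit ε of the real quadratic field ℚ(√p) has norm -1. -/
lemma sq_emod_four (x : ℤ) : x ^ 2 % 4 = 0 ∧ x % 2 = 0 ∨ x ^ 2 % 4 = 1 ∧ x % 2 ≠ 0 := by
  obtain ⟨q, r, hr, hx⟩ : ∃ q r, (r = 0 ∨ r = 1) ∧ x = 2 * q + r := by
    refine ⟨x / 2, x % 2, by omega, by omega⟩
  have hs : x ^ 2 = 4 * (q * q + q * r) + r ^ 2 := by rw [hx]; ring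
  rcases hr with rfl | rfl
  · left; constructor
    · omega
    · omega
  · right; constructor
    · omega
    · omega

set_option maxHeartbeats 1000000 in
/-- Negative Pell equation is solvable for primes `p ≡ 1 [MOD 4]`. -/
lemma neg_pell_solvable (p : ℕ) (hp : p.Prime) (hp4 : p % 4 = 1) :
    ∃ a b : ℤ, a ^ 2 - (p : ℤ) * b ^ 2 = -1 ∧ b ≠ 0 := by
  have hp5 : 5 ≤ p := by
    have := hp.two_le; omega
  have hd0 : (0 : ℤ) < (p : ℤ) := by exact_mod_cast hp.pos
  have hdns : ¬IsSquare ((p : ℤ)) := by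
    rw [Int.isSquare_natCast_iff]  -- guess name
    exact Prime.not_isSquare hp.prime
  obtain ⟨sol, hsol⟩ := Pell.IsFundamental.exists_of_not_isSquare hd0 hdns
  set x := sol.x with hxdef
  set y := sol.y with hydef
  have hprop : x ^ 2 - (p : ℤ) * y ^ 2 = 1 := sol.prop
  have hx1 : 1 < x := hsol.1
  have hy0 : 0 < y := hsol.2.1
  -- p = 4t+1
  obtain ⟨t, ht⟩ : ∃ t : ℤ, (p : ℤ) = 4 * t + 1 := ⟨(p / 4 : ℕ), by push_cast; omega⟩
  -- x odd, y even
  have hc : ∃ c, x ^ 2 - y ^ 2 = 1 + 4 * c := ⟨t * y ^ 2, by rw [ht] at hprop; linarith⟩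
  obtain ⟨c, hc⟩ := hc
  have hx4 := sq_emod_four x
  have hy4 := sq_emod_four y
  have hxodd : x % 2 ≠ 0 := by omega
  have hyeven : y % 2 = 0 := by omega
  obtain ⟨k, hk⟩ : ∃ k, x = 2 * k + 1 := ⟨x / 2, by omega⟩
  obtain ⟨z, hz⟩ : ∃ z, y = 2 * z := ⟨y / 2, by omega⟩
  have hz0 : 0 < z := by omega
  have hk1 : 1 ≤ k := by omega
  have hkey : k * (k + 1) = (p : ℤ) * z ^ 2 := by
    have : (2 * k + 1) ^ 2 - (p : ℤ) * (2 * z) ^ 2 = 1 := by rw [← hk, ← hz]; exact hprop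
    nlinarith [this]
  have hpprime : Prime ((p : ℤ)) := Nat.prime_iff_prime_int.mp hp
  have hcop : IsCoprime k (k + 1) := ⟨-1, 1, by ring⟩
  have hpdvd : (p : ℤ) ∣ k * (k + 1) := ⟨z ^ 2, hkey⟩
  rcases hpprime.dvd_mul.mp hpdvd with hpk | hpk1
  · -- p ∣ k : leads to contradiction with fundamentality
    exfalso
    obtain ⟨m, hm⟩ := hpk
    have hm1 : 1 ≤ m := by nlinarith
    have hmz : m * (k + 1) = z ^ 2 := by
      have : (p : ℤ) * (m * (k + 1)) = (p : ℤ) * z ^ 2 := by rw [← hkey, hm]; ring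
      exact mul_left_cancel₀ (by positivity) this
    have hcop2 : IsCoprime m (k + 1) := (hcop.of_isCoprime_of_dvd_left ⟨(p : ℤ), by rw [hm]; ring⟩)
    obtain ⟨a0, ha0⟩ := Int.sq_of_isCoprime hcop2 hmz
    have ha0' : m = a0 ^ 2 := by rcases ha0 with h | h; exact h; nlinarith
    have hcop3 : IsCoprime (k + 1) m := hcop2.symm
    obtain ⟨b0, hb0⟩ := Int.sq_of_isCoprime hcop3 (by rw [← hmz]; ring)
    have hb0' : k + 1 = b0 ^ 2 := by rcases hb0 with h | h; exact h; nlinarith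
    -- wlog a0, b0 > 0
    set a1 := |a0| with ha1
    set b1 := |b0| with hb1
    have ha1sq : m = a1 ^ 2 := by rw [ha0', ha1, sq_abs]
    have hb1sq : k + 1 = b1 ^ 2 := by rw [hb0', hb1, sq_abs]
    have ha1pos : 0 < a1 := by
      rcases (abs_nonneg a0).lt_or_eq with h | h
      · exact h
      · exfalso; nlinarith [ha1sq]
    have hb1pos : 1 < b1 := by
      by_contra hcon
      push_neg at hcon
      have : b1 ^ 2 ≤ 1 := by nlinarith [abs_nonneg b0]
      omega
    -- new solution (b1, a1)
    have hnew : b1 ^ 2 - (p : ℤ) * a1 ^ 2 = 1 := by rw [← ha1sq, ← hb1sq, hm]; ring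
    have hylb := hsol.y_le_y (a := Pell.Solution₁.mk b1 a1 hnew)
      (by rw [Pell.Solution₁.x_mk]; exact hb1pos) (by rw [Pell.Solution₁.y_mk]; exact ha1pos)
    rw [Pell.Solution₁.y_mk] at hylb
    -- y = 2 * z, z ^ 2 = m * (k+1) = (a1*b1)^2, z = a1 * b1
    have hzab : z = a1 * b1 := by
      have h1 : z ^ 2 = (a1 * b1) ^ 2 := by rw [← hmz, ha1sq, hb1sq]; ring
      nlinarith [h1]
    nlinarith [hylb, hz0]
  · -- p ∣ k + 1 : produces solution of negative Pell
    obtain ⟨m, hm⟩ := hpk1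
    have hm1 : 1 ≤ m := by nlinarith
    have hmz : k * m = z ^ 2 := by
      have : (p : ℤ) * (k * m) = (p : ℤ) * z ^ 2 := by rw [← hkey, hm]; ring
      exact mul_left_cancel₀ (by positivity) this
    have hcop2 : IsCoprime k m := (hcop.of_isCoprime_of_dvd_right ⟨(p : ℤ), by rw [hm]; ring⟩)
    obtain ⟨b0, hb0⟩ := Int.sq_of_isCoprime hcop2 hmz
    have hb0' : k = b0 ^ 2 := by rcases hb0 with h | h; exact h; nlinarith
    obtain ⟨a0, ha0⟩ := Int.sq_of_isCoprime hcop2.symm (by rw [← hmz]; ring)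
    have ha0' : m = a0 ^ 2 := by rcases ha0 with h | h; exact h; nlinarith
    refine ⟨b0, a0, ?_, ?_⟩
    · rw [← hb0', ← ha0']; omega
    · intro h
      rw [h] at ha0'
      nlinarith

open NumberField IntermediateField

set_option maxHeartbeats 2000000 in
set_option synthInstance.maxHeartbeats 1000000 in
/-- If `p` is a prime with `p ≡ 1 (mod 4)`, then the fundamental unit `ε` of the real
quadratic field `ℚ(√p)` has norm `-1`. -/
theorem fundamental_unit_norm_neg_one_of_prime_one_mod_four
    (p : ℕ) (hp : p.Prime) (hp4 : p % 4 = 1)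
    (K : IntermediateField ℚ ℝ) (hK : K = ℚ⟮(Real.sqrt p)⟯) [NumberField K]
    (ε : (𝓞 K)ˣ)
    (hfund : ∀ u : (𝓞 K)ˣ, ∃ n : ℤ, u = ε ^ n ∨ u = -ε ^ n) :
    Algebra.norm ℤ (ε : 𝓞 K) = -1 := by
  have hirr : Irrational (Real.sqrt p) := hp.irrational_sqrt
  have hsmem : Real.sqrt p ∈ K := by
    rw [hK]; exact mem_adjoin_simple_self ℚ _
  set s : K := ⟨Real.sqrt p, hsmem⟩ with hs
  have hsc : (s : ℝ) = Real.sqrt p := rfl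
  have hs2 : s ^ 2 = (p : K) := by
    apply Subtype.coe_injective
    push_cast [hsc]
    exact Real.sq_sqrt (by positivity)
  obtain ⟨a, b, hpell, hb⟩ := neg_pell_solvable p hp hp4
  set u : K := (a : K) + (b : K) * s with hu
  have hucoe : ((u : K) : ℝ) = (a : ℝ) + (b : ℝ) * Real.sqrt p := by
    rw [hu]; push_cast [hsc]; ring
  have hpK : (a : K) ^ 2 - (p : K) * (b : K) ^ 2 = -1 := by exact_mod_cast hpell
  have huirr : Irrational ((u : K) : ℝ) := by
    rw [hucoe]
    exact (hirr.intCast_mul hb).intCast_add a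
  -- u is integral over ℤ
  have hUint : IsIntegral ℤ u := by
    refine ⟨Polynomial.X ^ 2 - Polynomial.C (2 * a) * Polynomial.X - 1, by monicity!, ?_⟩
    have : Polynomial.aeval u
        (Polynomial.X ^ 2 - Polynomial.C (2 * a) * Polynomial.X - 1) = 0 := by
      simp only [map_sub, map_mul, map_pow, Polynomial.aeval_X, Polynomial.aeval_C, map_one,
        map_ofNat, map_intCast, eq_intCast]
      rw [hu]
      linear_combination (b : K) ^ 2 * hs2 - hpK
    simpa [Polynomial.aeval_def] using this
  set v : K := -(a : K) + (b : K) * s with hv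
  have hVint : IsIntegral ℤ v := by
    refine ⟨Polynomial.X ^ 2 + Polynomial.C (2 * a) * Polynomial.X - 1, by monicity!, ?_⟩
    have : Polynomial.aeval v
        (Polynomial.X ^ 2 + Polynomial.C (2 * a) * Polynomial.X - 1) = 0 := by
      simp only [map_sub, map_add, map_mul, map_pow, Polynomial.aeval_X, Polynomial.aeval_C,
        map_one, map_intCast, eq_intCast]
      rw [hv]
      push_cast
      linear_combination (b : K) ^ 2 * hs2 - hpK
    simpa [Polynomial.aeval_def] using this
  have huv : u * v = 1 := by
    rw [hu, hv]
    linear_combination (b : K) ^ 2 * hs2 - hpK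
  set U : 𝓞 K := ⟨u, hUint⟩ with hU
  set V : 𝓞 K := ⟨v, hVint⟩ with hV
  have hUV : U * V = 1 := by
    apply NumberField.RingOfIntegers.ext
    push_cast [hU, hV]
    exact huv
  set w : (𝓞 K)ˣ := ⟨U, V, hUV, by rw [mul_comm] at hUV; exact hUV⟩ with hw
  -- ℚ⟮u⟯ = ⊤
  have hadj : ℚ⟮u⟯ = (⊤ : IntermediateField ℚ K) := by
    apply IntermediateField.lift_injective
    erw [IntermediateField.lift_adjoin_simple, IntermediateField.lift_top, hucoe]
    rw [hK]
    apply le_antisymm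
    · rw [adjoin_simple_le_iff]
      exact add_mem (IntermediateField.intCast_mem _ a)
        (mul_mem (IntermediateField.intCast_mem _ b) (mem_adjoin_simple_self ℚ _))
    · rw [adjoin_simple_le_iff]
      have h1 : ((a : ℝ) + (b : ℝ) * Real.sqrt p) ∈ ℚ⟮((a : ℝ) + (b : ℝ) * Real.sqrt p)⟯ :=
        mem_adjoin_simple_self ℚ _
      have h2 : Real.sqrt p = ((b : ℝ))⁻¹ * (((a : ℝ) + (b : ℝ) * Real.sqrt p) - (a : ℝ)) := by
        have hbR : (b : ℝ) ≠ 0 := Int.cast_ne_zero.mpr hb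
        field_simp
        ring
      have h3 : ((b : ℝ))⁻¹ * (((a : ℝ) + (b : ℝ) * Real.sqrt p) - (a : ℝ)) ∈
          ℚ⟮((a : ℝ) + (b : ℝ) * Real.sqrt p)⟯ :=
        mul_mem (inv_mem (IntermediateField.intCast_mem _ b))
          (sub_mem h1 (IntermediateField.intCast_mem _ a))
      rwa [← h2] at h3
  -- minimal polynomial of u over ℚ
  have hQint : IsIntegral ℚ u := IsIntegral.of_finite ℚ u
  set q : Polynomial ℚ :=
    Polynomial.X ^ 2 - Polynomial.C ((2 * a : ℤ) : ℚ) * Polynomial.X - 1 with hq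
  have hqmonic : q.Monic := by rw [hq]; monicity!
  have hqdeg : q.natDegree = 2 := by rw [hq]; compute_degree!
  have hqaeval : Polynomial.aeval u q = 0 := by
    rw [hq]
    simp only [map_sub, map_mul, map_pow, Polynomial.aeval_X, Polynomial.aeval_C, map_one,
      map_intCast, eq_intCast, Rat.cast_intCast]
    rw [hu]
    push_cast
    linear_combination (b : K) ^ 2 * hs2 - hpK
  have hdvd : minpoly ℚ u ∣ q := minpoly.dvd ℚ u hqaeval
  have hdle : (minpoly ℚ u).natDegree ≤ 2 :=
    hqdeg ▸ Polynomial.natDegree_le_of_dvd hdvd hqmonic.ne_zero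
  have hdpos := minpoly.natDegree_pos hQint
  have hne1 : (minpoly ℚ u).natDegree ≠ 1 := by
    intro h1
    rw [minpoly.natDegree_eq_one_iff] at h1
    obtain ⟨r, hr⟩ := h1
    refine huirr ⟨r, ?_⟩
    rw [← hr]
    push_cast
    rfl
  have hdeg2 : (minpoly ℚ u).natDegree = 2 := by omega
  have hminq : minpoly ℚ u = q :=
    (Polynomial.eq_of_monic_of_dvd_of_natDegree_le (minpoly.monic hQint) hqmonic hdvd
      (by rw [hqdeg, hdeg2])).symm
  -- finrank of K over ℚ is 2
  have hfr : Module.finrank ℚ K = 2 := by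
    have h := IntermediateField.adjoin.finrank hQint
    rw [hadj, IntermediateField.finrank_top'] at h
    rw [h, hdeg2]
  -- norm of u over ℚ
  have hnormu : Algebra.norm ℚ u = -1 := by
    have hexp : ∀ F : IntermediateField ℚ K, F = ⊤ → Module.finrank ↥F ↥K = 1 := by
      rintro F rfl
      exact IntermediateField.finrank_top
    rw [Algebra.norm_eq_norm_adjoin ℚ u, hexp _ hadj, pow_one]
    rw [show AdjoinSimple.gen ℚ u = (IntermediateField.adjoin.powerBasis hQint).gen from rfl,
      Algebra.PowerBasis.norm_gen_eq_coeff_zero_minpoly]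
    rw [show (IntermediateField.adjoin.powerBasis hQint).gen = AdjoinSimple.gen ℚ u from rfl]
    rw [IntermediateField.minpoly_gen, hminq]
    rw [show (IntermediateField.adjoin.powerBasis hQint).dim = (minpoly ℚ u).natDegree from rfl,
      hdeg2]
    rw [hq]
    simp [Polynomial.coeff_sub, Polynomial.coeff_one, Polynomial.coeff_X_pow]
  -- norms over ℤ
  have hNU : Algebra.norm ℤ U = -1 := by
    have h := Algebra.coe_norm_int U
    rw [show ((U : 𝓞 K) : K) = u from rfl, hnormu] at h
    exact_mod_cast h
  have hnormneg : Algebra.norm ℚ (-1 : K) = 1 := by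
    rw [show (-1 : K) = algebraMap ℚ K (-1) from by rw [map_neg, map_one]]
    rw [Algebra.norm_algebraMap, hfr]
    norm_num
  have hNneg : Algebra.norm ℤ (-1 : 𝓞 K) = 1 := by
    have h := Algebra.coe_norm_int (-1 : 𝓞 K)
    rw [show ((-1 : 𝓞 K) : K) = -1 from by push_cast; ring, hnormneg] at h
    exact_mod_cast h
  -- conclusion
  have hunit : IsUnit (Algebra.norm ℤ (ε : 𝓞 K)) := by
    have := (Units.map (Algebra.norm ℤ : 𝓞 K →* ℤ) ε).isUnit
    simpa [Units.coe_map] using this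
  rcases Int.isUnit_iff.mp hunit with h1 | h1
  · exfalso
    set N : (𝓞 K)ˣ →* ℤˣ := Units.map (Algebra.norm ℤ : 𝓞 K →* ℤ) with hN
    have hNε : N ε = 1 := by
      apply Units.ext
      simpa [hN, Units.coe_map] using h1
    obtain ⟨n, hn | hn⟩ := hfund w
    · have key := congrArg N hn
      rw [map_zpow, hNε, one_zpow] at key
      have h2 : Algebra.norm ℤ U = 1 := by
        have h3 := congrArg Units.val key
        simpa [hN, Units.coe_map, hw] using h3
      rw [hNU] at h2
      exact absurd h2 (by norm_num)
    · have key := congrArg (Units.val) hn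
      have hval : U = -((ε ^ n : (𝓞 K)ˣ) : 𝓞 K) := by simpa [hw] using key
      have h2 : Algebra.norm ℤ U = Algebra.norm ℤ (-1 : 𝓞 K)
          * Algebra.norm ℤ ((ε ^ n : (𝓞 K)ˣ) : 𝓞 K) := by
        rw [← map_mul]
        congr 1
        rw [hval]; ring
      have h3 : Algebra.norm ℤ ((ε ^ n : (𝓞 K)ˣ) : 𝓞 K) = 1 := by
        have h5 : Algebra.norm ℤ ((ε ^ n : (𝓞 K)ˣ) : 𝓞 K) = ((N (ε ^ n) : ℤˣ) : ℤ) := rfl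
        rw [h5, map_zpow, hNε, one_zpow, Units.val_one]
      rw [hNU, hNneg, h3] at h2
      norm_num at h2
  · exact h1
end

section
/- Let k = ℚ(√d) be a real quadratic field with fundamental unit ε of norm +1, and m the squarefree part of Norm(ε+1). Then the squarefree part of D/m equals the squarefree part of -Norm(ε-1), where D is the discriminant of k. -/
open NumberField IntermediateField

namespace SqfPartAux

variable {S : Type*} [CommRing S]

lemma det_fin_two_add_smul_one {R : Type*} [CommRing R] (A : Matrix (Fin 2) (Fin 2) R) (c : R) :
    (A + c • 1).det = A.det + c * A.trace + c ^ 2 := by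
  simp [Matrix.det_fin_two, Matrix.trace_fin_two, Matrix.one_apply]; ring
lemma ch_fin_two {R : Type*} [CommRing R] (A : Matrix (Fin 2) (Fin 2) R) :
    A * A = A.trace • A - A.det • (1 : Matrix (Fin 2) (Fin 2) R) := by
  ext i j
  fin_cases i <;> fin_cases j <;>
    simp [Matrix.mul_apply, Fin.sum_univ_two, Matrix.trace_fin_two, Matrix.det_fin_two,
      Matrix.one_apply] <;> ring
lemma trace_sq_fin_two {R : Type*} [CommRing R] (A : Matrix (Fin 2) (Fin 2) R) :
    (A * A).trace = A.trace ^ 2 - 2 * A.det := by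
  simp [Matrix.mul_apply, Fin.sum_univ_two, Matrix.trace_fin_two, Matrix.det_fin_two]; ring


lemma elem_ch (b : Module.Basis (Fin 2) ℤ S) (x : S) :
    x * x = Algebra.trace ℤ S x • x - (Algebra.norm ℤ x : ℤ) • (1 : S) := by
  apply Algebra.leftMulMatrix_injective b
  have := ch_fin_two (Algebra.leftMulMatrix b x)
  rw [_root_.map_mul, map_sub, map_zsmul, map_zsmul, _root_.map_one,
    Algebra.trace_eq_matrix_trace b, Algebra.norm_eq_matrix_det b, this]

lemma elem_trace_sq (b : Module.Basis (Fin 2) ℤ S) (x : S) :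
    Algebra.trace ℤ S (x * x) = (Algebra.trace ℤ S x) ^ 2 - 2 * Algebra.norm ℤ x := by
  rw [Algebra.trace_eq_matrix_trace b, _root_.map_mul, trace_sq_fin_two,
    ← Algebra.trace_eq_matrix_trace b, ← Algebra.norm_eq_matrix_det b]

lemma elem_norm_add_intCast (b : Module.Basis (Fin 2) ℤ S) (x : S) (c : ℤ) :
    Algebra.norm ℤ (x + (c : S)) = Algebra.norm ℤ x + c * Algebra.trace ℤ S x + c ^ 2 := by
  have hc : (c : S) = c • (1 : S) := by simp
  rw [Algebra.norm_eq_matrix_det b, hc, map_add, map_zsmul, _root_.map_one, det_fin_two_add_smul_one,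
    ← Algebra.norm_eq_matrix_det b, ← Algebra.trace_eq_matrix_trace b]

lemma elem_trace_one (b : Module.Basis (Fin 2) ℤ S) : Algebra.trace ℤ S (1 : S) = 2 := by
  rw [Algebra.trace_eq_matrix_trace b, _root_.map_one, Matrix.trace_one]
  simp

lemma elem_norm_intCast (b : Module.Basis (Fin 2) ℤ S) (c : ℤ) : Algebra.norm ℤ ((c : ℤ) : S) = c ^ 2 := by
  have hc : ((c : ℤ) : S) = c • (1 : S) := by simp
  rw [Algebra.norm_eq_matrix_det b, hc, map_zsmul, _root_.map_one, Matrix.det_smul, Matrix.det_one]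
  simp


lemma discr_pair (b : Module.Basis (Fin 2) ℤ S)
    (htr1 : Algebra.trace ℤ S (1:S) = 2)
    (htrsq : ∀ x : S, Algebra.trace ℤ S (x * x) = (Algebra.trace ℤ S x) ^ 2 - 2 * Algebra.norm ℤ x)
    (x : S) :
    ∃ c : ℤ, (Algebra.trace ℤ S x) ^ 2 - 4 * Algebra.norm ℤ x = c ^ 2 * Algebra.discr ℤ ⇑b := by
  classical
  set v : Fin 2 → S := ![1, x] with hv
  set P : Matrix (Fin 2) (Fin 2) ℤ := Matrix.of fun i j => b.repr (v j) i with hP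
  have hvec : v = Matrix.vecMul ⇑b (P.map (algebraMap ℤ S)) := by
    funext j
    have hrepr := b.sum_repr (v j)
    rw [Fin.sum_univ_two, zsmul_eq_mul, zsmul_eq_mul] at hrepr
    simp only [Matrix.vecMul, dotProduct, Fin.sum_univ_two, Matrix.map_apply,
      Matrix.of_apply, hP, algebraMap_int_eq, Int.coe_castRingHom]
    nth_rewrite 1 [← hrepr]
    ring
  have h1 := Algebra.discr_of_matrix_vecMul (⇑b) P
  rw [← hvec] at h1
  refine ⟨P.det, ?_⟩
  rw [← h1, Algebra.discr_def, Matrix.det_fin_two]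
  simp only [Algebra.traceMatrix_apply, Algebra.traceForm_apply, hv]
  simp only [Matrix.cons_val_zero, Matrix.cons_val_one, Matrix.head_cons, one_mul, mul_one]
  rw [htr1, htrsq x]
  ring

lemma parity (b : Module.Basis (Fin 2) ℤ S)
    (htrsq : ∀ x : S, Algebra.trace ℤ S (x * x) = (Algebra.trace ℤ S x) ^ 2 - 2 * Algebra.norm ℤ x)
    (hD : ¬ (2 ∣ Algebra.discr ℤ ⇑b)) (x z : S)
    (h : x * x = 2 * z) : ∃ y : S, x = 2 * y := by
  classical
  have key : ∀ w u : S, w * w = 2 * u → 2 ∣ Algebra.trace ℤ S w := by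
    intro w u hu
    have h1 : Algebra.trace ℤ S (w * w) = 2 * Algebra.trace ℤ S u := by
      have : (2 : S) * u = (2 : ℤ) • u := by rw [zsmul_eq_mul]; norm_num
      rw [hu, this, map_zsmul, smul_eq_mul]
    have h2 : (2:ℤ) ∣ (Algebra.trace ℤ S w) ^ 2 := by
      rw [htrsq w] at h1
      exact ⟨Algebra.trace ℤ S u + Algebra.norm ℤ w, by linarith⟩
    exact Int.prime_two.dvd_of_dvd_pow h2
  have e0 : 2 ∣ Algebra.trace ℤ S (x * b 0) := key _ (z * (b 0 * b 0))
    (by rw [show (x * b 0) * (x * b 0) = (x*x) * (b 0 * b 0) by ring, h]; ring)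
  have e1 : 2 ∣ Algebra.trace ℤ S (x * b 1) := key _ (z * (b 1 * b 1))
    (by rw [show (x * b 1) * (x * b 1) = (x*x) * (b 1 * b 1) by ring, h]; ring)
  set r0 := b.repr x 0 with hr0
  set r1 := b.repr x 1 with hr1
  have hx : x = r0 • b 0 + r1 • b 1 := by
    have := b.sum_repr x; rw [Fin.sum_univ_two] at this; exact this.symm
  set T00 := Algebra.trace ℤ S (b 0 * b 0)
  set T01 := Algebra.trace ℤ S (b 0 * b 1)
  set T10 := Algebra.trace ℤ S (b 1 * b 0)
  set T11 := Algebra.trace ℤ S (b 1 * b 1)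
  have exp : ∀ j : Fin 2, Algebra.trace ℤ S (x * b j)
      = r0 * Algebra.trace ℤ S (b 0 * b j) + r1 * Algebra.trace ℤ S (b 1 * b j) := by
    intro j
    rw [hx, add_mul, smul_mul_assoc, smul_mul_assoc, map_add, map_zsmul, map_zsmul,
      smul_eq_mul, smul_eq_mul]
  rw [exp 0] at e0
  rw [exp 1] at e1
  have hdet : Algebra.discr ℤ ⇑b = T00 * T11 - T01 * T10 := by
    rw [Algebra.discr_def, Matrix.det_fin_two]
    simp only [Algebra.traceMatrix_apply, Algebra.traceForm_apply]
    rfl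
  obtain ⟨a, ha⟩ := e0
  obtain ⟨b', hb⟩ := e1
  have hr0d : (2:ℤ) ∣ r0 := by
    have h5 : (2:ℤ) ∣ r0 * (T00 * T11 - T01 * T10) :=
      ⟨T11 * a - T10 * b', by linear_combination T11 * ha - T10 * hb⟩
    rcases (Int.prime_two.dvd_mul.mp h5) with h6 | h6
    · exact h6
    · exact absurd (hdet ▸ h6) hD
  have hr1d : (2:ℤ) ∣ r1 := by
    have h5 : (2:ℤ) ∣ r1 * (T00 * T11 - T01 * T10) :=
      ⟨T00 * b' - T01 * a, by linear_combination T00 * hb - T01 * ha⟩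
    rcases (Int.prime_two.dvd_mul.mp h5) with h6 | h6
    · exact h6
    · exact absurd (hdet ▸ h6) hD
  obtain ⟨k0, hk0⟩ := hr0d
  obtain ⟨k1, hk1⟩ := hr1d
  refine ⟨k0 • b 0 + k1 • b 1, ?_⟩
  rw [hx, hk0, hk1, mul_smul, mul_smul, ← smul_add, zsmul_eq_mul]
  norm_num


lemma isUnit_two_int (h : IsUnit (2:ℤ)) : False := by
  rw [Int.isUnit_iff] at h; omega

lemma half_odd (m : ℤ) (hm : Squarefree m) : Odd m ∨ ∃ u, m = 2 * u ∧ Odd u := by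
  rcases Int.even_or_odd m with he | ho
  · obtain ⟨r, hr⟩ := he
    right
    refine ⟨r, by omega, ?_⟩
    rcases Int.even_or_odd r with he' | ho'
    · obtain ⟨w, hw⟩ := he'
      exact absurd (hm 2 ⟨w, by omega⟩) isUnit_two_int
    · exact ho'
  · exact Or.inl ho

lemma two_adic (m m' : ℤ) (hm : Squarefree m) (hm' : Squarefree m') :
    ¬ (8 ∣ m * m') ∧ ((4 ∣ m * m') → (2 ∣ m ∧ 2 ∣ m')) := by
  rcases half_odd m hm with ⟨j, hj⟩ | ⟨u, hu, j, hj⟩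
  · rcases half_odd m' hm' with ⟨j', hj'⟩ | ⟨u', hu', j', hj'⟩
    · obtain ⟨w, hw⟩ : ∃ w, m * m' = 2 * w + 1 :=
        ⟨2*(j*j')+j+j', by rw [hj, hj']; ring⟩
      exact ⟨by rintro ⟨k, hk⟩; rw [hw] at hk; omega,
             by rintro ⟨k, hk⟩; rw [hw] at hk; exfalso; omega⟩
    · obtain ⟨w, hw⟩ : ∃ w, m * m' = 2 * (2 * w + 1) :=
        ⟨2*(j*j')+j+j', by rw [hj, hu', hj']; ring⟩
      exact ⟨by rintro ⟨k, hk⟩; rw [hw] at hk; omega,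
             by rintro ⟨k, hk⟩; rw [hw] at hk; exfalso; omega⟩
  · rcases half_odd m' hm' with ⟨j', hj'⟩ | ⟨u', hu', j', hj'⟩
    · obtain ⟨w, hw⟩ : ∃ w, m * m' = 2 * (2 * w + 1) :=
        ⟨2*(j*j')+j+j', by rw [hu, hj, hj']; ring⟩
      exact ⟨by rintro ⟨k, hk⟩; rw [hw] at hk; omega,
             by rintro ⟨k, hk⟩; rw [hw] at hk; exfalso; omega⟩
    · obtain ⟨w, hw⟩ : ∃ w, m * m' = 4 * (2 * w + 1) :=
        ⟨2*(j*j')+j+j', by rw [hu, hj, hu', hj']; ring⟩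
      refine ⟨by rintro ⟨k, hk⟩; rw [hw] at hk; omega,
             fun _ => ⟨⟨u, hu⟩, ⟨u', hu'⟩⟩⟩

lemma nat_dvd_two (n : ℕ) (hp : ∀ p : ℕ, p.Prime → p ∣ n → p = 2) (h4 : ¬ (4 ∣ n)) : n ∣ 2 := by
  rcases n with _ | _ | n
  · exact absurd ⟨0, rfl⟩ h4
  · exact one_dvd 2
  · set N := n + 1 + 1 with hN
    have hNne : N ≠ 1 := by omega
    have h2 : 2 ∣ N := by
      have hmf := hp N.minFac (Nat.minFac_prime hNne) (Nat.minFac_dvd N)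
      rw [← hmf]; exact Nat.minFac_dvd N
    obtain ⟨k, hk⟩ := h2
    have hk1 : k = 1 := by
      by_contra hk1
      have hkp := Nat.minFac_prime hk1
      have hkdvd : k.minFac ∣ N := dvd_trans (Nat.minFac_dvd k) ⟨2, by omega⟩
      have h2k : k.minFac = 2 := hp _ hkp hkdvd
      obtain ⟨jj, hjj⟩ : 2 ∣ k := h2k ▸ Nat.minFac_dvd k
      exact h4 ⟨jj, by omega⟩
    have : N = 2 := by omega
    rw [this]

lemma arith_main (m m' s s' c D t : ℤ)
    (hmsf : Squarefree m) (hm'sf : Squarefree m')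
    (h1 : t + 2 = m * s ^ 2) (h2 : t - 2 = m' * s' ^ 2)
    (hs : s ≠ 0) (hs' : s' ≠ 0)
    (hdisc : t ^ 2 - 4 = c ^ 2 * D)
    (hram : 2 ∣ m → 2 ∣ m' → 2 ∣ D) :
    ∃ r : ℤ, D = m * m' * r ^ 2 := by
  have hm0 : m ≠ 0 := hmsf.ne_zero
  have hm'0 : m' ≠ 0 := hm'sf.ne_zero
  have hS : m * m' * (s * s') ^ 2 = c ^ 2 * D := by
    calc m * m' * (s * s') ^ 2 = (m * s ^ 2) * (m' * s' ^ 2) := by ring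
    _ = (t + 2) * (t - 2) := by rw [h1, h2]
    _ = t ^ 2 - 4 := by ring
    _ = c ^ 2 * D := hdisc
  have hSne : s * s' ≠ 0 := mul_ne_zero hs hs'
  have hq0 : m * m' ≠ 0 := mul_ne_zero hm0 hm'0
  have hc0 : c ≠ 0 := by
    rintro rfl
    apply mul_ne_zero hq0 (pow_ne_zero 2 hSne)
    rw [hS]; ring
  have hg0 : 0 < Int.gcd c (s * s') := Int.gcd_pos_iff.mpr (Or.inl hc0)
  set g : ℤ := (Int.gcd c (s * s') : ℤ) with hg
  have hgne : g ≠ 0 := by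
    rw [hg]
    exact Int.natCast_ne_zero.mpr hg0.ne'
  set c₁ := c / g with hc₁
  set S₁ := (s * s') / g with hS₁
  have hcdef : g * c₁ = c := Int.mul_ediv_cancel' (Int.gcd_dvd_left _ _)
  have hSdef : g * S₁ = s * s' := Int.mul_ediv_cancel' (Int.gcd_dvd_right _ _)
  have hco : IsCoprime c₁ S₁ :=
    Int.isCoprime_iff_gcd_eq_one.mpr (Int.gcd_div_gcd_div_gcd hg0)
  have hS2 : m * m' * S₁ ^ 2 = c₁ ^ 2 * D := by
    have hgg : g ^ 2 * (m * m' * S₁ ^ 2) = g ^ 2 * (c₁ ^ 2 * D) := by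
      rw [← hSdef, ← hcdef] at hS
      linear_combination hS
    exact mul_left_cancel₀ (pow_ne_zero 2 hgne) hgg
  have hc₁0 : c₁ ≠ 0 := by
    intro h
    rw [h, mul_zero] at hcdef
    exact hc0 hcdef.symm
  have hcp : IsCoprime (c₁ ^ 2) (S₁ ^ 2) := hco.pow
  have hdvd : c₁ ^ 2 ∣ m * m' :=
    hcp.dvd_of_dvd_mul_right ⟨D, by linear_combination hS2⟩
  have hmdvd : m ∣ t + 2 := Dvd.intro _ h1.symm
  have hm'dvd : m' ∣ t - 2 := Dvd.intro _ h2.symm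
  have hprime : ∀ p : ℕ, p.Prime → (p : ℤ) ∣ c₁ → p = 2 := by
    intro p pp hpc
    have ppz : Prime (p : ℤ) := Int.prime_iff_natAbs_prime.mpr (by simpa using pp)
    have hp2 : (p : ℤ) * (p : ℤ) ∣ m * m' := by
      refine dvd_trans (mul_dvd_mul hpc hpc) ?_
      rw [← sq]; exact hdvd
    by_cases hpm : (p : ℤ) ∣ m
    · by_cases hpm' : (p : ℤ) ∣ m'
      · have h4p : (p : ℤ) ∣ 4 := by
          have ha := dvd_trans hpm hmdvd
          have hb := dvd_trans hpm' hm'dvd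
          have h5 : (p : ℤ) ∣ (t + 2) - (t - 2) := dvd_sub ha hb
          simpa using h5
        have h4n : p ∣ 4 := by exact_mod_cast h4p
        have h4n' : p ∣ 2 ^ 2 := by simpa using h4n
        have h2n : p ∣ 2 := pp.dvd_of_dvd_pow h4n'
        exact (Nat.prime_dvd_prime_iff_eq pp Nat.prime_two).mp h2n
      · exfalso
        have hcop : IsCoprime ((p:ℤ) * (p:ℤ)) m' :=
          ((ppz.coprime_iff_not_dvd).mpr hpm').mul_left ((ppz.coprime_iff_not_dvd).mpr hpm')
        have h6 : (p:ℤ) * (p:ℤ) ∣ m := hcop.dvd_of_dvd_mul_right hp2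
        have h7 := hmsf _ h6
        rw [Int.isUnit_iff] at h7
        have := pp.two_le
        omega
    · exfalso
      have hcop : IsCoprime ((p:ℤ) * (p:ℤ)) m :=
        ((ppz.coprime_iff_not_dvd).mpr hpm).mul_left ((ppz.coprime_iff_not_dvd).mpr hpm)
      have h6 : (p:ℤ) * (p:ℤ) ∣ m' := hcop.dvd_of_dvd_mul_left hp2
      have h7 := hm'sf _ h6
      rw [Int.isUnit_iff] at h7
      have := pp.two_le
      omega
  have h8 := (two_adic m m' hmsf hm'sf).1
  have h4c : ¬ ((4:ℤ) ∣ c₁) := by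
    rintro ⟨k, hk⟩
    apply h8
    obtain ⟨w, hw⟩ := hdvd
    exact ⟨2 * k ^ 2 * w, by rw [hw, hk]; ring⟩
  set n := c₁.natAbs with hn
  have hn2 : n ∣ 2 := by
    apply nat_dvd_two
    · intro p pp hpn
      exact hprime p pp (Int.dvd_natAbs.mp (Int.natCast_dvd_natCast.mpr hpn))
    · intro h4n
      exact h4c (Int.dvd_natAbs.mp (by exact_mod_cast h4n))
  have hsq : ((n : ℤ)) ^ 2 = c₁ ^ 2 := by rw [hn]; exact Int.natAbs_sq c₁
  rcases (Nat.dvd_prime Nat.prime_two).mp hn2 with h | h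
  · have hc1sq : c₁ ^ 2 = 1 := by rw [← hsq, h]; norm_num
    refine ⟨S₁, ?_⟩
    rw [hc1sq, one_mul] at hS2
    exact hS2.symm
  · exfalso
    have hc1sq : c₁ ^ 2 = 4 := by rw [← hsq, h]; norm_num
    rw [hc1sq] at hS2 hdvd
    obtain ⟨h2m, h2m'⟩ := (two_adic m m' hmsf hm'sf).2 hdvd
    have hD2 : 2 ∣ D := hram h2m h2m'
    rcases half_odd m hmsf with ⟨j, hj⟩ | ⟨u, hu, hou⟩
    · obtain ⟨k, hk⟩ := h2m; omega
    rcases half_odd m' hm'sf with ⟨j', hj'⟩ | ⟨u', hu', hou'⟩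
    · obtain ⟨k, hk⟩ := h2m'; omega
    have hS₁odd : Odd S₁ := by
      rw [Int.not_even_iff_odd.symm, even_iff_two_dvd]
      intro h2S
      have h2c : (2:ℤ) ∣ c₁ := by
        have hh : (2:ℤ) ∣ (n:ℤ) := by rw [h]; norm_num
        exact Int.dvd_natAbs.mp hh
      exact isUnit_two_int (hco.isUnit_of_dvd' h2c h2S)
    have hDodd : Odd D := by
      have hDeq : D = u * u' * S₁ ^ 2 := by
        have h9 : (4:ℤ) * (u * u' * S₁ ^ 2) = 4 * D := by
          calc (4:ℤ) * (u * u' * S₁ ^ 2) = (2*u) * (2*u') * S₁ ^ 2 := by ring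
          _ = m * m' * S₁ ^ 2 := by rw [← hu, ← hu']
          _ = 4 * D := hS2
        linarith
      rw [hDeq]
      exact ((hou.mul hou').mul (hS₁odd.pow))
    obtain ⟨k, hk⟩ := hD2
    obtain ⟨j, hj⟩ := hDodd
    omega


end SqfPartAux

open SqfPartAux Polynomial


set_option maxHeartbeats 800000 in
lemma quad_discr_main (K : Type*) [Field K] [NumberField K]
    (hrk : Module.finrank ℚ K = 2)
    (ε : (𝓞 K)ˣ) (hne1 : (ε : 𝓞 K) ≠ 1) (hnem1 : (ε : 𝓞 K) ≠ -1)
    (hnorm : Algebra.norm ℤ (ε : 𝓞 K) = 1)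
    (m : ℤ) (hmsf : Squarefree m) (s : ℤ)
    (hs : Algebra.norm ℤ ((ε : 𝓞 K) + 1) = m * s ^ 2)
    (m' : ℤ) (hm'sf : Squarefree m') (s' : ℤ)
    (hs' : -Algebra.norm ℤ ((ε : 𝓞 K) - 1) = m' * s' ^ 2) :
    ∃ r : ℤ, NumberField.discr K = m * m' * r ^ 2 := by
  have hrkZ : Module.finrank ℤ (𝓞 K) = 2 := by
    rw [NumberField.RingOfIntegers.rank]; exact hrk
  have hcard : Fintype.card (Module.Free.ChooseBasisIndex ℤ (𝓞 K)) = 2 := by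
    rw [← Module.finrank_eq_card_chooseBasisIndex]; exact hrkZ
  let b : Module.Basis (Fin 2) ℤ (𝓞 K) :=
    (NumberField.RingOfIntegers.basis K).reindex (Fintype.equivFinOfCardEq hcard)
  have hdiscr : Algebra.discr ℤ ⇑b = NumberField.discr K := NumberField.discr_eq_discr K b
  have htr1 := elem_trace_one b
  have htrsq := fun x => elem_trace_sq b x
  set t : ℤ := Algebra.trace ℤ (𝓞 K) (ε : 𝓞 K) with ht
  have h1' : t + 2 = m * s ^ 2 := by
    have h := elem_norm_add_intCast b (ε : 𝓞 K) 1
    rw [Int.cast_one] at h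
    rw [hnorm, ← ht] at h
    rw [h] at hs
    linarith [hs]
  have h2' : t - 2 = m' * s' ^ 2 := by
    have h := elem_norm_add_intCast b (ε : 𝓞 K) (-1)
    have hcast : ((ε : 𝓞 K) + ((-1 : ℤ) : 𝓞 K)) = (ε : 𝓞 K) - 1 := by push_cast; ring
    rw [hcast, hnorm, ← ht] at h
    rw [h] at hs'
    linarith [hs']
  have hch : (ε : 𝓞 K) * (ε : 𝓞 K) = (t : 𝓞 K) * (ε : 𝓞 K) - 1 := by
    have h := elem_ch b (ε : 𝓞 K)
    rw [hnorm, one_smul, zsmul_eq_mul, ← ht] at h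
    exact h
  have htne2 : t ≠ 2 := by
    intro h2
    have hz : ((ε : 𝓞 K) - 1) * ((ε : 𝓞 K) - 1) = 0 := by
      rw [h2] at hch; push_cast at hch; linear_combination hch
    exact hne1 (sub_eq_zero.mp (mul_self_eq_zero.mp hz))
  have htnem2 : t ≠ -2 := by
    intro h2
    have hz : ((ε : 𝓞 K) + 1) * ((ε : 𝓞 K) + 1) = 0 := by
      rw [h2] at hch; push_cast at hch; linear_combination hch
    exact hnem1 (eq_neg_of_add_eq_zero_left (mul_self_eq_zero.mp hz))
  have hs0 : s ≠ 0 := by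
    intro h; rw [h] at h1'; simp at h1'; omega
  have hs'0 : s' ≠ 0 := by
    intro h; rw [h] at h2'; simp at h2'; omega
  obtain ⟨c, hcrel⟩ := discr_pair b htr1 htrsq (ε : 𝓞 K)
  rw [hnorm, hdiscr, ← ht] at hcrel
  have hram : 2 ∣ m → 2 ∣ m' → 2 ∣ NumberField.discr K := by
    intro h2m _
    by_contra hD2
    obtain ⟨m₁, hm₁⟩ := h2m
    have hkey : ((ε : 𝓞 K) + 1) * ((ε : 𝓞 K) + 1) = ((m * s ^ 2 : ℤ) : 𝓞 K) * (ε : 𝓞 K) := by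
      rw [← h1']; push_cast; linear_combination hch
    have hsK : ((s : ℤ) : K) ≠ 0 := Int.cast_ne_zero.mpr hs0
    set y : K := (((ε : 𝓞 K) + 1 : 𝓞 K) : K) / ((s : ℤ) : K) with hy
    have hy2 : y * y = algebraMap (𝓞 K) K (((m : ℤ) : 𝓞 K) * (ε : 𝓞 K)) := by
      rw [hy, div_mul_div_comm, NumberField.RingOfIntegers.coe_eq_algebraMap, ← map_mul, hkey]
      rw [map_mul]
      push_cast
      simp only [map_intCast]
      field_simp
    have hyint : IsIntegral (𝓞 K) y :=
      ⟨X ^ 2 - C (((m : ℤ) : 𝓞 K) * (ε : 𝓞 K)), monic_X_pow_sub_C _ two_ne_zero, by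
        rw [eval₂_sub, eval₂_X_pow, eval₂_C, sq, hy2, sub_self]⟩
    obtain ⟨β, hβ⟩ := IsIntegrallyClosed.isIntegral_iff.mp hyint
    have hβ2 : β * β = ((m : ℤ) : 𝓞 K) * (ε : 𝓞 K) := by
      apply IsFractionRing.injective (𝓞 K) K
      rw [map_mul, hβ, hy2]
    have hββ : β * β = 2 * (((m₁ : ℤ) : 𝓞 K) * (ε : 𝓞 K)) := by
      rw [hβ2, hm₁]; push_cast; ring
    have hD2' : ¬ (2 ∣ Algebra.discr ℤ ⇑b) := by rw [hdiscr]; exact hD2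
    obtain ⟨δ, hδ⟩ := parity b htrsq hD2' β _ hββ
    have heq : ((4 : ℤ) : 𝓞 K) * (δ * δ) = ((m : ℤ) : 𝓞 K) * (ε : 𝓞 K) := by
      rw [← hβ2, hδ]; push_cast; ring
    have hnrm := congrArg (Algebra.norm ℤ) heq
    rw [map_mul, map_mul, map_mul, elem_norm_intCast b 4, elem_norm_intCast b m, hnorm, mul_one] at hnrm
    set w : ℤ := Algebra.norm ℤ δ with hw
    have h16 : 16 * (w * w) = m * m := by linear_combination hnrm
    have hm₁sq : m₁ * m₁ = 4 * (w * w) := by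
      rw [hm₁] at h16
      have h4 : (4:ℤ) * (m₁ * m₁) = 4 * (4 * (w * w)) := by linear_combination -h16
      exact mul_left_cancel₀ (by norm_num) h4
    have h2m₁ : (2:ℤ) ∣ m₁ := by
      have hd2 : (2:ℤ) ∣ m₁ * m₁ := ⟨2 * (w * w), by linarith [hm₁sq]⟩
      rcases Int.prime_two.dvd_mul.mp hd2 with h | h <;> exact h
    obtain ⟨k, hk⟩ := h2m₁
    exact isUnit_two_int (hmsf 2 ⟨k, by rw [hm₁, hk]; ring⟩)
  exact arith_main m m' s s' c (NumberField.discr K) t hmsf hm'sf h1' h2' hs0 hs'0 hcrel hram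


/-- Let `k = ℚ(√d)` have fundamental unit `ε > 1` of norm `+1`, `m` the squarefree part
of `Norm(ε+1)`, and `m'` the squarefree part of `-Norm(ε-1)`.  Then the squarefree part of
`D/m` equals `m'`, where `D` is the discriminant of `k`; equivalently `D = m·m'·s²` for
some integer `s`. -/
theorem squarefree_part_discr_div_m
    (d : ℤ) (hd1 : 1 < d) (hdsf : Squarefree d)
    (K : IntermediateField ℚ ℝ) (hK : K = ℚ⟮(Real.sqrt (d : ℝ))⟯) [NumberField K]
    (ε : (𝓞 K)ˣ)
    (hfund : ∀ u : (𝓞 K)ˣ, ∃ n : ℤ, u = ε ^ n ∨ u = -ε ^ n)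
    (hpos : 1 < (((ε : 𝓞 K) : K) : ℝ))
    (hnorm : Algebra.norm ℤ (ε : 𝓞 K) = 1)
    (m : ℤ) (hmsf : Squarefree m)
    (hm : ∃ s : ℤ, Algebra.norm ℤ ((ε : 𝓞 K) + 1) = m * s ^ 2)
    (m' : ℤ) (hm'sf : Squarefree m')
    (hm' : ∃ s : ℤ, -Algebra.norm ℤ ((ε : 𝓞 K) - 1) = m' * s ^ 2) :
    ∃ s : ℤ, NumberField.discr K = m * m' * s ^ 2 := by
  obtain ⟨s, hs⟩ := hm
  obtain ⟨s', hs'⟩ := hm'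
  have hd0 : (0:ℝ) ≤ (d:ℝ) := by exact_mod_cast (by omega : (0:ℤ) ≤ d)
  have hsqd : (Real.sqrt (d:ℝ)) ^ 2 = (d:ℝ) := Real.sq_sqrt hd0
  have hnsq : ¬ IsSquare d := by
    rintro ⟨r, hr⟩
    have hu := hdsf r (by rw [hr])
    rw [Int.isUnit_iff] at hu
    rcases hu with h | h <;> rw [h] at hr <;> omega
  have hirr : Irrational (Real.sqrt (d:ℝ)) :=
    (irrational_sqrt_intCast_iff_of_nonneg (by omega)).mpr hnsq
  have hpoly : (Polynomial.aeval (Real.sqrt (d:ℝ))) (X ^ 2 - C (d:ℚ)) = 0 := by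
    simp only [map_sub, map_pow, aeval_X, aeval_C]
    rw [hsqd, eq_ratCast (algebraMap ℚ ℝ) (d:ℚ)]
    push_cast
    ring
  have hint : IsIntegral ℚ (Real.sqrt (d:ℝ)) :=
    ⟨X ^ 2 - C (d:ℚ), monic_X_pow_sub_C _ two_ne_zero, hpoly⟩
  have hdeg : (minpoly ℚ (Real.sqrt (d:ℝ))).natDegree = 2 := by
    have hdvd := minpoly.dvd ℚ _ hpoly
    have hle := Polynomial.natDegree_le_of_dvd hdvd
      (monic_X_pow_sub_C (d:ℚ) (two_ne_zero)).ne_zero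
    rw [Polynomial.natDegree_X_pow_sub_C] at hle
    have hposd := minpoly.natDegree_pos hint
    have hne1 : (minpoly ℚ (Real.sqrt (d:ℝ))).natDegree ≠ 1 := by
      intro hone
      obtain ⟨q, hq⟩ := minpoly.natDegree_eq_one_iff.mp hone
      rw [eq_ratCast (algebraMap ℚ ℝ) q] at hq
      exact hirr ⟨q, hq⟩
    omega
  have hrk : Module.finrank ℚ K = 2 := by
    rw [hK, IntermediateField.adjoin.finrank hint, hdeg]
  have hne1 : (ε : 𝓞 K) ≠ 1 := by
    intro h
    rw [h, NumberField.RingOfIntegers.coe_eq_algebraMap, map_one, OneMemClass.coe_one] at hpos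
    exact lt_irrefl 1 hpos
  have hnem1 : (ε : 𝓞 K) ≠ -1 := by
    intro h
    rw [h, NumberField.RingOfIntegers.coe_eq_algebraMap, RingHom.map_neg, RingHom.map_one,
      NegMemClass.coe_neg, OneMemClass.coe_one] at hpos
    linarith [hpos]
  exact quad_discr_main K hrk ε hne1 hnem1 hnorm m hmsf s hs m' hm'sf s' hs'
end

section
/- If q is a prime with q ≡ 3 (mod 8), then the fundamental unit ε of ℚ(√q) has norm +1 and the squarefree part of Norm(ε+1) equals 2q. -/
open NumberField IntermediateField Polynomial

lemma sqrt_int (q : ℕ) : IsIntegral ℚ (Real.sqrt q) :=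
  ⟨X ^ 2 - C (q : ℚ), monic_X_pow_sub_C _ (by norm_num),
    by simp [Real.sq_sqrt (by positivity : (0:ℝ) ≤ (q:ℝ))]⟩

lemma sqrt_minpoly (q : ℕ) (hq : q.Prime) :
    minpoly ℚ (Real.sqrt q) = X ^ 2 - C (q : ℚ) := by
  have hirr : Irrational (Real.sqrt q) := hq.irrational_sqrt
  have hroot : (Polynomial.aeval (Real.sqrt q)) (X ^ 2 - C (q : ℚ)) = 0 := by
    simp [Real.sq_sqrt (by positivity : (0:ℝ) ≤ (q:ℝ))]
  have hirred : Irreducible (X ^ 2 - C (q : ℚ)) := by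
    apply X_pow_sub_C_irreducible_of_prime Nat.prime_two
    intro b hb
    apply hirr
    refine ⟨|b|, ?_⟩
    have : ((b : ℝ))^2 = (q : ℝ) := by exact_mod_cast congrArg (Rat.cast : ℚ → ℝ) hb
    rw [show ((|b| : ℚ) : ℝ) = |(b:ℝ)| by push_cast; rfl]
    rw [← Real.sqrt_sq_eq_abs, this]
  exact (minpoly.eq_of_irreducible_of_monic hirred hroot (by
    apply monic_X_pow_sub_C _ (by norm_num))).symm

lemma exists_repr (q : ℕ) (hq : q.Prime) (α : ℚ⟮(Real.sqrt q)⟯) :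
    ∃ x y : ℚ, α = algebraMap ℚ _ x + y • AdjoinSimple.gen ℚ (Real.sqrt q) := by
  have hint := sqrt_int q
  set pb := adjoin.powerBasis hint with hpb
  have hdim : pb.dim = 2 := by
    simp only [hpb, IntermediateField.adjoin.powerBasis, sqrt_minpoly q hq]
    rw [Polynomial.natDegree_X_pow_sub_C]
  set B := pb.basis.reindex (finCongr hdim) with hBdef
  have hB : ∀ i : Fin 2, B i = (AdjoinSimple.gen ℚ (Real.sqrt q)) ^ (i : ℕ) := by
    intro i
    rw [hBdef, Module.Basis.reindex_apply, pb.basis_eq_pow]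
    congr 1
  refine ⟨B.repr α 0, B.repr α 1, ?_⟩
  have h := B.sum_repr α
  rw [Fin.sum_univ_two] at h
  nth_rewrite 1 [← h]
  rw [hB 0, hB 1]
  simp [Algebra.smul_def]

lemma coe_real (q : ℕ) (x y : ℚ) :
    ((algebraMap ℚ ℚ⟮(Real.sqrt q)⟯ x + y • AdjoinSimple.gen ℚ (Real.sqrt q) :
        ℚ⟮(Real.sqrt q)⟯) : ℝ) = x + y * Real.sqrt q := by
  push_cast
  simp [AdjoinSimple.coe_gen, Algebra.smul_def]

lemma sq_of_coprime_pos {u w c : ℤ} (h : IsCoprime u w) (heq : u * w = c ^ 2)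
    (hpos : 0 < u) : ∃ s : ℤ, u = s ^ 2 := by
  obtain ⟨s, hs | hs⟩ := Int.sq_of_isCoprime h heq
  · exact ⟨s, hs⟩
  · exfalso; nlinarith [sq_nonneg s]

lemma quad_core (q : ℕ) (hq : q.Prime) (hq8 : q % 8 = 3) (a b : ℤ)
    (h : a ^ 2 - q * b ^ 2 = 1) (ha : 2 ≤ a) (hb : b ≠ 0) :
    (∃ s, a + 1 = q * s ^ 2) ∨
      (∃ u v : ℤ, u ^ 2 - q * v ^ 2 = 1 ∧ u ^ 2 + q * v ^ 2 = a ∧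
        (2 * u * v = b ∨ 2 * u * v = -b)) := by
  have hqZ : Prime (q : ℤ) := Nat.prime_iff_prime_int.mp hq
  have hq0 : (0:ℤ) < q := by exact_mod_cast hq.pos
  have hfac : (a - 1) * (a + 1) = q * b ^ 2 := by linear_combination h
  rcases Int.even_or_odd b with ⟨c, hc⟩ | ⟨c, hc⟩
  · -- b even, a odd
    right
    subst hc
    have haodd : a % 2 = 1 := by
      rcases Int.even_or_odd a with ⟨j, hj⟩ | ⟨j, hj⟩
      · exfalso
        subst hj
        have h4 : (4:ℤ) ∣ 1 := ⟨j ^ 2 - q * c ^ 2, by linear_combination -h⟩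
        norm_num at h4
      · omega
    obtain ⟨a', ha'⟩ : ∃ a', a = 2 * a' + 1 := ⟨a / 2, by omega⟩
    subst ha'
    have hc0 : c ≠ 0 := by rintro rfl; exact hb (by ring)
    have hfac2 : a' * (a' + 1) = q * c ^ 2 :=
      mul_left_cancel₀ (show (4:ℤ) ≠ 0 by norm_num) (by linear_combination h)
    have hcop : IsCoprime a' (a' + 1) := ⟨-1, 1, by ring⟩
    have hdvd : (q:ℤ) ∣ a' * (a' + 1) := ⟨c ^ 2, hfac2⟩
    have ha'pos : 0 < a' := by omega
    rcases hqZ.dvd_mul.mp hdvd with ⟨w, hw⟩ | ⟨w, hw⟩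
    · -- a' = q * w : good case
      have hww : w * (a' + 1) = c ^ 2 := by
        refine mul_left_cancel₀ (show (q:ℤ) ≠ 0 by positivity) ?_
        rw [← hfac2, hw]; ring
      have hwpos : 0 < w := by
        by_contra h'
        push_neg at h'
        have h2 : (q:ℤ) * w ≤ 0 := mul_nonpos_of_nonneg_of_nonpos hq0.le h'
        linarith [hw, ha'pos]
      have hcopw : IsCoprime w (a' + 1) :=
        hcop.of_isCoprime_of_dvd_left ⟨q, hw.trans (mul_comm _ _)⟩
      obtain ⟨v, hv⟩ := sq_of_coprime_pos hcopw hww hwpos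
      obtain ⟨u, hu⟩ := sq_of_coprime_pos hcopw.symm
        (show (a' + 1) * w = c ^ 2 by linear_combination hww) (by omega)
      refine ⟨u, v, ?_, ?_, ?_⟩
      · rw [← hu, ← hv, ← hw]; ring
      · rw [← hu, ← hv, ← hw]; ring
      · have h5 : u ^ 2 * v ^ 2 = c ^ 2 := by rw [← hu, ← hv]; linear_combination hww
        have h0 : (2*u*v - (c + c)) * (2*u*v + (c + c)) = 0 := by linear_combination 4 * h5
        rcases mul_eq_zero.mp h0 with h1 | h1
        · left; linarith
        · right; linarith
    · -- a' + 1 = q * w : contradiction, -1 is a square mod q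
      exfalso
      have hww : a' * w = c ^ 2 := by
        refine mul_left_cancel₀ (show (q:ℤ) ≠ 0 by positivity) ?_
        rw [← hfac2, hw]; ring
      have hcopw : IsCoprime a' w :=
        hcop.of_isCoprime_of_dvd_right ⟨q, hw.trans (mul_comm _ _)⟩
      obtain ⟨u, hu⟩ := sq_of_coprime_pos hcopw hww ha'pos
      have hdvd1 : (q:ℤ) ∣ u ^ 2 + 1 := ⟨w, by linear_combination hw - hu⟩
      haveI : Fact q.Prime := ⟨hq⟩
      have h2 : ((u : ZMod q)) ^ 2 = -1 := by
        have h3 : ((u ^ 2 + 1 : ℤ) : ZMod q) = 0 :=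
          (ZMod.intCast_zmod_eq_zero_iff_dvd _ _).mpr hdvd1
        push_cast at h3
        linear_combination h3
      have hsq : IsSquare (-1 : ZMod q) := ⟨u, by rw [← h2]; ring⟩
      rw [ZMod.exists_sq_eq_neg_one_iff] at hsq
      omega
  · -- b odd, a even
    left
    subst hc
    have haeven : a % 2 = 0 := by
      rcases Int.even_or_odd a with ⟨j, hj⟩ | ⟨j, hj⟩
      · omega
      · exfalso
        subst hj
        have h4 : (4:ℤ) ∣ (q:ℤ) := ⟨j ^ 2 + j - q * (c ^ 2 + c), by linear_combination -h⟩
        obtain ⟨k, hk⟩ := h4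
        omega
    obtain ⟨a', ha'⟩ : ∃ a', a = 2 * a' := ⟨a / 2, by omega⟩
    have hcop : IsCoprime (a - 1) (a + 1) := ⟨-(a' + 1), a', by subst ha'; ring⟩
    have hdvd : (q:ℤ) ∣ (a - 1) * (a + 1) := ⟨(2 * c + 1) ^ 2, by rw [hfac]⟩
    rcases hqZ.dvd_mul.mp hdvd with ⟨w, hw⟩ | ⟨w, hw⟩
    · -- a - 1 = q * w : contradiction mod 8
      exfalso
      have hww : w * (a + 1) = (2 * c + 1) ^ 2 := by
        refine mul_left_cancel₀ (show (q:ℤ) ≠ 0 by positivity) ?_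
        rw [← hfac, hw]; ring
      have hwpos : 0 < w := by
        by_contra h'
        push_neg at h'
        have h2 : (q:ℤ) * w ≤ 0 := mul_nonpos_of_nonneg_of_nonpos hq0.le h'
        linarith [hw]
      have hcopw : IsCoprime w (a + 1) :=
        hcop.of_isCoprime_of_dvd_left ⟨q, hw.trans (mul_comm _ _)⟩
      obtain ⟨v, hv⟩ := sq_of_coprime_pos hcopw hww hwpos
      obtain ⟨u, hu⟩ := sq_of_coprime_pos hcopw.symm
        (show (a + 1) * w = (2 * c + 1) ^ 2 by linear_combination hww) (by omega)
      have hqv : (q:ℤ) * v ^ 2 = a - 1 := by rw [← hv, ← hw]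
      have hueq : u ^ 2 - (q:ℤ) * v ^ 2 = 2 := by linear_combination -hu - hqv
      have huodd : u % 2 = 1 := by
        rcases Int.even_or_odd u with ⟨j, hj⟩ | ⟨j, hj⟩
        · exfalso
          subst hj
          have h2 : (2:ℤ) ∣ a + 1 := ⟨2 * j ^ 2, by linear_combination hu⟩
          obtain ⟨k, hk⟩ := h2
          omega
        · omega
      have hvodd : v % 2 = 1 := by
        rcases Int.even_or_odd v with ⟨j, hj⟩ | ⟨j, hj⟩
        · exfalso
          subst hj
          have h2 : (2:ℤ) ∣ a - 1 := ⟨q * (2 * j ^ 2), by linear_combination -hqv⟩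
          obtain ⟨k, hk⟩ := h2
          omega
        · omega
      obtain ⟨i, hi⟩ : ∃ i, u = 2 * i + 1 := ⟨u / 2, by omega⟩
      obtain ⟨j, hj⟩ : ∃ j, v = 2 * j + 1 := ⟨v / 2, by omega⟩
      subst hi hj
      obtain ⟨I, hI⟩ : ∃ I, i * (i + 1) = 2 * I :=
        (Int.even_mul_succ_self i).elim fun k hk => ⟨k, by omega⟩
      obtain ⟨J, hJ⟩ : ∃ J, j * (j + 1) = 2 * J :=
        (Int.even_mul_succ_self j).elim fun k hk => ⟨k, by omega⟩
      have h8 : (8:ℤ) ∣ 1 + (q:ℤ) :=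
        ⟨I - q * J, by linear_combination -hueq + 4 * hI - 4 * (q:ℤ) * hJ⟩
      obtain ⟨k, hk⟩ := h8
      omega
    · -- a + 1 = q * w : the good case
      have hww : (a - 1) * w = (2 * c + 1) ^ 2 := by
        refine mul_left_cancel₀ (show (q:ℤ) ≠ 0 by positivity) ?_
        rw [← hfac, hw]; ring
      have hwpos : 0 < w := by
        by_contra h'
        push_neg at h'
        have h2 : (q:ℤ) * w ≤ 0 := mul_nonpos_of_nonneg_of_nonpos hq0.le h'
        linarith [hw]
      have hcopw : IsCoprime (a - 1) w :=
        hcop.of_isCoprime_of_dvd_right ⟨q, hw.trans (mul_comm _ _)⟩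
      obtain ⟨v, hv⟩ := sq_of_coprime_pos hcopw.symm
        (show w * (a - 1) = (2 * c + 1) ^ 2 by linear_combination hww) hwpos
      exact ⟨v, by rw [hw, hv]⟩

-- rational with 2x, x^2 - q y^2 integral are half-integers making integer coords
lemma int_coords (q : ℕ) (hq : q.Prime) (hq4 : q % 4 = 3) (x y : ℚ) (T N : ℤ)
    (hT : (T : ℚ) = 2 * x) (hN : (N : ℚ) = x ^ 2 - q * y ^ 2) :
    ∃ a b : ℤ, (a : ℚ) = x ∧ (b : ℚ) = y := by
  have hq0 : (0:ℚ) < q := by exact_mod_cast hq.pos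
  -- s := q * (2 y) is integral over ℤ
  have hs2 : ((q : ℚ) * (2 * y)) ^ 2 = ((q * (T ^ 2 - 4 * N) : ℤ) : ℚ) := by
    push_cast
    linear_combination (-(q:ℚ) * ((T:ℚ) + 2 * x)) * hT + 4 * (q:ℚ) * hN
  have hsint : IsIntegral ℤ ((q : ℚ) * (2 * y)) := by
    refine ⟨X ^ 2 - C (q * (T ^ 2 - 4 * N) : ℤ), monic_X_pow_sub_C _ (by norm_num), ?_⟩
    rw [eval₂_sub, eval₂_pow, eval₂_X, eval₂_C]
    rw [show (algebraMap ℤ ℚ) (q * (T ^ 2 - 4 * N) : ℤ) = ((q * (T ^ 2 - 4 * N) : ℤ) : ℚ) from rfl,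
      hs2, sub_self]
  obtain ⟨z, hz⟩ := IsIntegrallyClosed.isIntegral_iff.mp hsint
  have hz' : (z : ℚ) = (q : ℚ) * (2 * y) := by rw [← hz]; rfl
  have hzz : z ^ 2 = q * (T ^ 2 - 4 * N) := by
    have h5 : ((z : ℚ)) ^ 2 = ((q * (T ^ 2 - 4 * N) : ℤ) : ℚ) := by rw [hz']; exact hs2
    exact_mod_cast h5
  have hqZ : Prime (q : ℤ) := Nat.prime_iff_prime_int.mp hq
  have hqz : (q:ℤ) ∣ z := by
    have : (q:ℤ) ∣ z ^ 2 := ⟨T ^ 2 - 4 * N, hzz⟩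
    exact hqZ.dvd_of_dvd_pow this
  obtain ⟨B, hB⟩ := hqz
  have hBy : (B : ℚ) = 2 * y := by
    have : (q : ℚ) * B = (q : ℚ) * (2 * y) := by
      rw [← hz']
      exact_mod_cast hB.symm
    exact mul_left_cancel₀ (ne_of_gt hq0) this
  have hTB : T ^ 2 - (q:ℤ) * B ^ 2 = 4 * N := by
    have h2 : (q:ℤ) * ((q:ℤ) * B ^ 2) = (q:ℤ) * (T ^ 2 - 4 * N) := by
      rw [← hzz, hB]; ring
    have := mul_left_cancel₀ (show (q:ℤ) ≠ 0 from Int.natCast_ne_zero.mpr hq.ne_zero) h2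
    linarith
  -- parity: T and B both even
  have hTeven : T % 2 = 0 ∧ B % 2 = 0 := by
    rcases Int.even_or_odd T with ⟨t, ht⟩ | ⟨t, ht⟩ <;>
      rcases Int.even_or_odd B with ⟨s, hs⟩ | ⟨s, hs⟩
    · constructor <;> omega
    · exfalso
      subst ht hs
      have h4 : (4:ℤ) ∣ (q:ℤ) := ⟨t ^ 2 - q * (s ^ 2 + s) - N, by linear_combination -hTB⟩
      obtain ⟨k, hk⟩ := h4
      omega
    · exfalso
      subst ht hs
      have h4 : (4:ℤ) ∣ 1 := ⟨N + q * s ^ 2 - t ^ 2 - t, by linear_combination hTB⟩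
      norm_num at h4
    · exfalso
      subst ht hs
      have h4 : (4:ℤ) ∣ (q:ℤ) - 1 := ⟨t ^ 2 + t - q * (s ^ 2 + s) - N, by linear_combination -hTB⟩
      obtain ⟨k, hk⟩ := h4
      omega
  obtain ⟨a, ha⟩ : ∃ a, T = 2 * a := ⟨T / 2, by omega⟩
  obtain ⟨b, hb⟩ : ∃ b, B = 2 * b := ⟨B / 2, by omega⟩
  refine ⟨a, b, ?_, ?_⟩
  · have : ((2 * a : ℤ) : ℚ) = 2 * x := by rw [← ha]; exact hT
    push_cast at this
    linarith
  · have : ((2 * b : ℤ) : ℚ) = 2 * y := by rw [← hb]; exact hBy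
    push_cast at this
    linarith

lemma no_norm_neg_one (q : ℕ) (hq : q.Prime) (hq4 : q % 4 = 3) (a b : ℤ)
    (h : a ^ 2 - q * b ^ 2 = -1) : False := by
  haveI : Fact q.Prime := ⟨hq⟩
  have hdvd : (q:ℤ) ∣ a ^ 2 + 1 := ⟨b ^ 2, by linear_combination h⟩
  have h2 : ((a : ZMod q)) ^ 2 = -1 := by
    have h3 : ((a ^ 2 + 1 : ℤ) : ZMod q) = 0 := (ZMod.intCast_zmod_eq_zero_iff_dvd _ _).mpr hdvd
    push_cast at h3
    linear_combination h3
  have hsq : IsSquare (-1 : ZMod q) := ⟨a, by rw [← h2]; ring⟩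
  rw [ZMod.exists_sq_eq_neg_one_iff] at hsq
  omega
variable {q : ℕ}
lemma gen_sq (q : ℕ) :
    (AdjoinSimple.gen ℚ (Real.sqrt q)) ^ 2 = algebraMap ℚ ℚ⟮(Real.sqrt q)⟯ (q : ℚ) := by
  apply Subtype.ext
  push_cast
  simp [Real.sq_sqrt (by positivity : (0:ℝ) ≤ (q:ℝ))]

lemma norm_trace (hq : q.Prime) (x y : ℚ) :
    Algebra.norm ℚ (algebraMap ℚ ℚ⟮(Real.sqrt q)⟯ x + y • AdjoinSimple.gen ℚ (Real.sqrt q))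
        = x ^ 2 - q * y ^ 2 ∧
      Algebra.trace ℚ ℚ⟮(Real.sqrt q)⟯
        (algebraMap ℚ ℚ⟮(Real.sqrt q)⟯ x + y • AdjoinSimple.gen ℚ (Real.sqrt q)) = 2 * x := by
  set K := ℚ⟮(Real.sqrt q)⟯
  set g := AdjoinSimple.gen ℚ (Real.sqrt q) with hgdef
  have hint := sqrt_int q
  set pb := adjoin.powerBasis hint with hpb
  have hdim : pb.dim = 2 := by
    simp only [hpb, IntermediateField.adjoin.powerBasis, sqrt_minpoly q hq]
    rw [Polynomial.natDegree_X_pow_sub_C]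
  set B := pb.basis.reindex (finCongr hdim) with hBdef
  have hB : ∀ i : Fin 2, B i = g ^ (i : ℕ) := by
    intro i
    rw [hBdef, Module.Basis.reindex_apply, pb.basis_eq_pow]
    congr 1
  have hB0 : B 0 = 1 := by simpa using hB 0
  have hB1 : B 1 = g := by simpa using hB 1
  have hg2 : g ^ 2 = algebraMap ℚ K (q : ℚ) := gen_sq q
  set α := algebraMap ℚ K x + y • g with hα
  have hmul0 : α * B 0 = x • B 0 + y • B 1 := by
    rw [hB0, hB1, hα]; simp [Algebra.smul_def]
  have hmul1 : α * B 1 = (q * y) • B 0 + x • B 1 := by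
    have hgg : g * g = algebraMap ℚ K (q : ℚ) := by rw [← sq]; exact hg2
    rw [hB0, hB1, hα, add_mul]
    have h2 : (y • g) * g = y • (algebraMap ℚ K (q : ℚ)) := by
      rw [Algebra.smul_def, mul_assoc, hgg, ← Algebra.smul_def]
    rw [h2]
    simp only [Algebra.smul_def, map_mul, mul_one]
    ring
  have hM : Algebra.leftMulMatrix B α = !![x, q * y; y, x] := by
    ext i j
    rw [Algebra.leftMulMatrix_eq_repr_mul]
    fin_cases i <;> fin_cases j <;>
      simp [hmul0, hmul1, map_add, map_smul, Module.Basis.repr_self, Finsupp.single_apply]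
  constructor
  · rw [show Algebra.norm ℚ α = _ from Algebra.norm_eq_matrix_det B α, hM, Matrix.det_fin_two_of]; ring
  · rw [show Algebra.trace ℚ K α = _ from Algebra.trace_eq_matrix_trace B α, hM, Matrix.trace_fin_two_of]; ring

lemma gen_int (q : ℕ) : IsIntegral ℤ (AdjoinSimple.gen ℚ (Real.sqrt q)) := by
  refine ⟨X ^ 2 - C (q : ℤ), monic_X_pow_sub_C _ (by norm_num), ?_⟩
  rw [eval₂_sub, eval₂_pow, eval₂_X, eval₂_C]
  rw [show (algebraMap ℤ _) ((q:ℕ):ℤ) = algebraMap ℚ ℚ⟮(Real.sqrt q)⟯ ((q:ℕ):ℚ) by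
    rw [map_natCast, map_natCast]]
  rw [gen_sq q, sub_self]

set_option maxHeartbeats 2000000 in
/-- If `q` is a prime with `q ≡ 3 (mod 8)`, then the fundamental unit `ε` of `ℚ(√q)` has
norm `+1` and the squarefree part of `Norm(ε+1)` equals `2q`. -/
theorem m_eq_two_q_of_prime_three_mod_eight
    (q : ℕ) (hq : q.Prime) (hq8 : q % 8 = 3)
    (K : IntermediateField ℚ ℝ) (hK : K = ℚ⟮(Real.sqrt q)⟯) [NumberField K]
    (ε : (𝓞 K)ˣ)
    (hfund : ∀ u : (𝓞 K)ˣ, ∃ n : ℤ, u = ε ^ n ∨ u = -ε ^ n)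
    (hpos : 1 < (((ε : 𝓞 K) : K) : ℝ)) :
    Algebra.norm ℤ (ε : 𝓞 K) = 1 ∧
      ∃ s : ℤ, Algebra.norm ℤ ((ε : 𝓞 K) + 1) = 2 * q * s ^ 2 := by
  subst hK
  have hq4 : q % 4 = 3 := by omega
  obtain ⟨x, y, hxy⟩ := exists_repr q hq ((ε : 𝓞 ℚ⟮(Real.sqrt q)⟯) : ℚ⟮(Real.sqrt q)⟯)
  obtain ⟨a, b, hxa, hyb⟩ := int_coords q hq hq4 x y
      (Algebra.trace ℤ _ (ε : 𝓞 ℚ⟮(Real.sqrt q)⟯)) (Algebra.norm ℤ (ε : 𝓞 ℚ⟮(Real.sqrt q)⟯))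
      (by rw [Algebra.coe_trace_int, hxy, (norm_trace hq x y).2])
      (by rw [Algebra.coe_norm_int, hxy, (norm_trace hq x y).1])
  subst hxa hyb
  have hnormε : (Algebra.norm ℤ (ε : 𝓞 ℚ⟮(Real.sqrt q)⟯) : ℚ) = (a : ℚ) ^ 2 - q * (b : ℚ) ^ 2 := by
    rw [Algebra.coe_norm_int, hxy, (norm_trace hq _ _).1]
  have hunit : IsUnit (Algebra.norm ℤ (ε : 𝓞 ℚ⟮(Real.sqrt q)⟯)) := by
    refine IsUnit.of_mul_eq_one (Algebra.norm ℤ (((ε⁻¹ : (𝓞 ℚ⟮(Real.sqrt q)⟯)ˣ) : 𝓞 ℚ⟮(Real.sqrt q)⟯))) ?_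
    rw [← map_mul, show ((ε : 𝓞 ℚ⟮(Real.sqrt q)⟯) * ((ε⁻¹ : (𝓞 ℚ⟮(Real.sqrt q)⟯)ˣ) : 𝓞 ℚ⟮(Real.sqrt q)⟯)) = 1 from ε.mul_inv, map_one]
  have habs : a ^ 2 - (q:ℤ) * b ^ 2 = 1 := by
    rcases Int.isUnit_iff.mp hunit with h1 | h1
    · have h2 : ((1:ℤ):ℚ) = (a : ℚ) ^ 2 - q * (b : ℚ) ^ 2 := by rw [← h1]; exact hnormε
      exact_mod_cast h2.symm
    · exfalso
      refine no_norm_neg_one q hq hq4 a b ?_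
      have h2 : ((-1:ℤ):ℚ) = (a : ℚ) ^ 2 - q * (b : ℚ) ^ 2 := by rw [← h1]; exact hnormε
      exact_mod_cast h2.symm
  have hnorm1 : Algebra.norm ℤ (ε : 𝓞 ℚ⟮(Real.sqrt q)⟯) = 1 := by
    have h2 : (Algebra.norm ℤ (ε : 𝓞 ℚ⟮(Real.sqrt q)⟯) : ℚ) = ((1:ℤ):ℚ) := by
      rw [hnormε]; exact_mod_cast habs
    exact_mod_cast h2
  refine ⟨hnorm1, ?_⟩
  -- real estimates
  have hrnn : (0:ℝ) ≤ (q:ℝ) := by positivity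
  have hr2 : (Real.sqrt q) ^ 2 = (q:ℝ) := Real.sq_sqrt hrnn
  have he : (((ε : 𝓞 ℚ⟮(Real.sqrt q)⟯) : ℚ⟮(Real.sqrt q)⟯) : ℝ) = (a:ℝ) + (b:ℝ) * Real.sqrt q := by
    rw [hxy, coe_real]
    push_cast
    ring
  rw [he] at hpos
  have habsR : (a:ℝ) ^ 2 - q * (b:ℝ) ^ 2 = 1 := by exact_mod_cast habs
  have hconj : ((a:ℝ) + b * Real.sqrt q) * ((a:ℝ) - b * Real.sqrt q) = 1 := by
    linear_combination habsR - (b:ℝ) ^ 2 * hr2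
  have hcpos : 0 < (a:ℝ) - b * Real.sqrt q := by nlinarith
  have hclt1 : (a:ℝ) - b * Real.sqrt q < 1 := by nlinarith
  have ha0 : 0 < a := by
    have : (0:ℝ) < a := by nlinarith
    exact_mod_cast this
  have hbne : b ≠ 0 := by
    rintro rfl
    have h0 : (a - 1) * (a + 1) = 0 := by linear_combination habs
    have ha1 : a = 1 := by rcases mul_eq_zero.mp h0 with h | h <;> omega
    rw [ha1] at hpos
    norm_num at hpos
  have ha2 : 2 ≤ a := by
    rcases eq_or_lt_of_le (show 0 + 1 ≤ a by omega) with h | h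
    · exfalso
      have ha1 : a = 1 := by omega
      subst ha1
      have h0 : (q:ℤ) * b ^ 2 = 0 := by linear_combination -habs
      have hq0 : (q:ℤ) ≠ 0 := Int.natCast_ne_zero.mpr hq.ne_zero
      rcases mul_eq_zero.mp h0 with h' | h'
      · exact hq0 h'
      · exact hbne ((pow_eq_zero_iff (two_ne_zero)).mp h')
    · omega
  rcases quad_core q hq hq8 a b habs ha2 hbne with ⟨s, hs⟩ | ⟨u, v, huv1, huv2, huvb⟩
  · -- squarefree part is 2q
    refine ⟨s, ?_⟩
    have hcoe : (((ε : 𝓞 ℚ⟮(Real.sqrt q)⟯) + 1 : 𝓞 ℚ⟮(Real.sqrt q)⟯) : ℚ⟮(Real.sqrt q)⟯)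
        = algebraMap ℚ _ ((a:ℚ) + 1) + (b:ℚ) • AdjoinSimple.gen ℚ (Real.sqrt q) := by
      have h0 : (((ε : 𝓞 ℚ⟮(Real.sqrt q)⟯) + 1 : 𝓞 ℚ⟮(Real.sqrt q)⟯) : ℚ⟮(Real.sqrt q)⟯)
          = ((ε : 𝓞 ℚ⟮(Real.sqrt q)⟯) : ℚ⟮(Real.sqrt q)⟯) + 1 := by push_cast; ring
      rw [h0, hxy, map_add, map_one]
      ring
    have h2 : (Algebra.norm ℤ ((ε : 𝓞 ℚ⟮(Real.sqrt q)⟯) + 1) : ℚ)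
        = ((a:ℚ) + 1) ^ 2 - q * (b:ℚ) ^ 2 := by
      rw [Algebra.coe_norm_int, hcoe, (norm_trace hq _ _).1]
    have h3 : Algebra.norm ℤ ((ε : 𝓞 ℚ⟮(Real.sqrt q)⟯) + 1) = (a + 1) ^ 2 - q * b ^ 2 := by
      have h4 : (Algebra.norm ℤ ((ε : 𝓞 ℚ⟮(Real.sqrt q)⟯) + 1) : ℚ)
          = (((a + 1) ^ 2 - q * b ^ 2 : ℤ) : ℚ) := by rw [h2]; push_cast; ring
      exact_mod_cast h4
    rw [h3]
    linear_combination habs + 2 * hs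
  · -- impossible: ε would be a square
    exfalso
    have hg2 := gen_sq q
    set Θ : 𝓞 ℚ⟮(Real.sqrt q)⟯ := ⟨AdjoinSimple.gen ℚ (Real.sqrt q), gen_int q⟩ with hΘdef
    have hΘcoe : ((Θ : 𝓞 ℚ⟮(Real.sqrt q)⟯) : ℚ⟮(Real.sqrt q)⟯) = AdjoinSimple.gen ℚ (Real.sqrt q) := rfl
    have hΘsq : Θ ^ 2 = ((q : ℕ) : 𝓞 ℚ⟮(Real.sqrt q)⟯) := by
      apply NumberField.RingOfIntegers.ext
      push_cast [hΘcoe]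
      rw [hg2, map_natCast]
    -- the candidate square root unit
    have hUV : ((u : 𝓞 ℚ⟮(Real.sqrt q)⟯) + v * Θ) * ((u : 𝓞 ℚ⟮(Real.sqrt q)⟯) - v * Θ) = 1 := by
      have h1 := congrArg (Int.cast : ℤ → 𝓞 ℚ⟮(Real.sqrt q)⟯) huv1
      push_cast at h1
      linear_combination -(v : 𝓞 ℚ⟮(Real.sqrt q)⟯) ^ 2 * hΘsq + h1
    set η : (𝓞 ℚ⟮(Real.sqrt q)⟯)ˣ :=
      ⟨(u : 𝓞 ℚ⟮(Real.sqrt q)⟯) + v * Θ, (u : 𝓞 ℚ⟮(Real.sqrt q)⟯) - v * Θ, hUV,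
        (mul_comm _ _).trans hUV⟩ with hηdef
    -- ε as explicit unit
    have hab : ((a : 𝓞 ℚ⟮(Real.sqrt q)⟯) + b * Θ) * ((a : 𝓞 ℚ⟮(Real.sqrt q)⟯) - b * Θ) = 1 := by
      have h1 := congrArg (Int.cast : ℤ → 𝓞 ℚ⟮(Real.sqrt q)⟯) habs
      push_cast at h1
      linear_combination -(b : 𝓞 ℚ⟮(Real.sqrt q)⟯) ^ 2 * hΘsq + h1
    set ζ : (𝓞 ℚ⟮(Real.sqrt q)⟯)ˣ :=
      ⟨(a : 𝓞 ℚ⟮(Real.sqrt q)⟯) + b * Θ, (a : 𝓞 ℚ⟮(Real.sqrt q)⟯) - b * Θ, hab,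
        (mul_comm _ _).trans hab⟩ with hζdef
    have hεζ : ε = ζ := by
      apply Units.ext
      apply NumberField.RingOfIntegers.ext
      rw [hxy]
      show _ = (((a : 𝓞 ℚ⟮(Real.sqrt q)⟯) + b * Θ : 𝓞 ℚ⟮(Real.sqrt q)⟯) : ℚ⟮(Real.sqrt q)⟯)
      push_cast [hΘcoe]
      rw [Algebra.smul_def]
      norm_num
    -- η ^ 2 = ε or η ^ 2 = ε⁻¹
    have hval : (η.val) ^ 2 = (a : 𝓞 ℚ⟮(Real.sqrt q)⟯) + (2 * u * v : ℤ) * Θ := by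
      have h1 := congrArg (Int.cast : ℤ → 𝓞 ℚ⟮(Real.sqrt q)⟯) huv2
      push_cast at h1
      show ((u : 𝓞 ℚ⟮(Real.sqrt q)⟯) + v * Θ) ^ 2 = _
      push_cast
      linear_combination (v : 𝓞 ℚ⟮(Real.sqrt q)⟯) ^ 2 * hΘsq + h1 * 1 + (0 : 𝓞 ℚ⟮(Real.sqrt q)⟯)
    have hη2 : η ^ 2 = ε ∨ η ^ 2 = ε⁻¹ := by
      rcases huvb with hb2 | hb2
      · left
        apply Units.ext
        rw [Units.val_pow_eq_pow_val, hval, hεζ]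
        show _ = (a : 𝓞 ℚ⟮(Real.sqrt q)⟯) + b * Θ
        rw [hb2]
      · right
        apply Units.ext
        rw [Units.val_pow_eq_pow_val, hval, hεζ]
        show _ = (a : 𝓞 ℚ⟮(Real.sqrt q)⟯) - b * Θ
        rw [hb2]
        push_cast
        ring
    -- torsion-freeness from 1 < ε in ℝ
    have htorsN : ∀ m : ℕ, m ≠ 0 → ε ^ m ≠ 1 := by
      intro m hm hcon
      have h1 : ((ε : 𝓞 ℚ⟮(Real.sqrt q)⟯) : ℚ⟮(Real.sqrt q)⟯) ^ m = 1 := by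
        have := congrArg (fun u : (𝓞 ℚ⟮(Real.sqrt q)⟯)ˣ =>
          (((u : 𝓞 ℚ⟮(Real.sqrt q)⟯) : ℚ⟮(Real.sqrt q)⟯))) hcon
        simpa using this
      have h2 : ((((ε : 𝓞 ℚ⟮(Real.sqrt q)⟯) : ℚ⟮(Real.sqrt q)⟯)) : ℝ) ^ m = 1 := by
        have := congrArg (fun z : ℚ⟮(Real.sqrt q)⟯ => (z : ℝ)) h1
        simpa using this
      rw [he] at h2
      have h3 : (1:ℝ) < ((a:ℝ) + (b:ℝ) * Real.sqrt q) ^ m := one_lt_pow₀ hpos hm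
      rw [h2] at h3
      exact lt_irrefl _ h3
    have htors : ∀ k : ℤ, ε ^ k = 1 → k = 0 := by
      intro k hk
      by_contra hk0
      rcases lt_or_gt_of_ne hk0 with hneg | hposk
      · have h1 : ε ^ (-k) = 1 := by rw [zpow_neg, hk, inv_one]
        have h2 : ε ^ ((-k).toNat) = 1 := by
          rw [← h1, ← zpow_natCast, Int.toNat_of_nonneg (by omega)]
        exact htorsN _ (by omega) h2
      · have h2 : ε ^ (k.toNat) = 1 := by
          rw [← hk, ← zpow_natCast, Int.toNat_of_nonneg (by omega)]
        exact htorsN _ (by omega) h2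
    obtain ⟨n, hn | hn⟩ := hfund η
    all_goals {
      have hsq : η ^ 2 = ε ^ (2 * n) := by
        rw [hn]
        first
          | (rw [← zpow_natCast (ε ^ n) 2, ← zpow_mul, mul_comm])
          | (rw [neg_sq, ← zpow_natCast (ε ^ n) 2, ← zpow_mul, mul_comm])
        norm_num
      rcases hη2 with hcase | hcase
      · have h1 : ε ^ (2 * n - 1) = 1 := by
          rw [zpow_sub, zpow_one, ← hsq, hcase, mul_inv_cancel]
        have := htors _ h1
        omega
      · have h1 : ε ^ (2 * n + 1) = 1 := by
          rw [zpow_add, zpow_one, ← hsq, hcase, inv_mul_cancel]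
        have := htors _ h1
        omega
    }
end

section
/- If q is a prime with q ≡ 7 (mod 8), then the fundamental unit ε of ℚ(√q) has norm +1 and the squarefree part of Norm(ε+1) equals 2. -/
open NumberField IntermediateField

open Polynomial

/-- A rational whose square is an integer is an integer. -/
lemma aux_rat_int_of_sq (r : ℚ) (m : ℤ) (h : r ^ 2 = (m : ℚ)) : ∃ t : ℤ, (t : ℚ) = r := by
  have hint : IsIntegral ℤ r := by
    refine ⟨X ^ 2 - C m, monic_X_pow_sub_C m two_ne_zero, ?_⟩
    rw [eval₂_sub, eval₂_pow, eval₂_X, eval₂_C]; simp [h]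
  exact IsIntegrallyClosed.isIntegral_iff.mp hint

/-- Factorization: coprime positive `x * y = q * c ^ 2` with `q` prime. -/
lemma aux_fact (q x y c : ℤ) (hq : Prime q) (hqpos : 0 < q) (hx : 0 < x) (hy : 0 < y)
    (hco : IsCoprime x y) (h : x * y = q * c ^ 2) :
    (∃ s r : ℤ, x = q * r ^ 2 ∧ y = s ^ 2) ∨ (∃ s r : ℤ, x = s ^ 2 ∧ y = q * r ^ 2) := by
  have hqd : q ∣ x * y := h ▸ dvd_mul_right q _
  have sq_pos : ∀ z : ℤ, 0 < z → (∃ s, z = s ^ 2 ∨ z = -s ^ 2) → ∃ s, z = s ^ 2 := by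
    rintro z hz ⟨s, hs | hs⟩
    · exact ⟨s, hs⟩
    · exfalso; nlinarith [sq_nonneg s]
  rcases hq.dvd_mul.mp hqd with hd | hd
  · left
    obtain ⟨k, hk⟩ := hd
    have hk' : k * y = c ^ 2 := by
      have : q * (k * y) = q * c ^ 2 := by rw [← h, hk]; ring
      exact mul_left_cancel₀ hq.ne_zero this
    have hkpos : 0 < k := by nlinarith
    have hcoky : IsCoprime k y := (hco.symm.of_isCoprime_of_dvd_right ⟨q, by rw [hk]; ring⟩).symm
    obtain ⟨r, hr⟩ := sq_pos k hkpos (Int.sq_of_isCoprime hcoky hk')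
    obtain ⟨s, hs⟩ := sq_pos y hy (Int.sq_of_isCoprime hcoky.symm (by rw [mul_comm]; exact hk'))
    exact ⟨s, r, by rw [hk, hr], hs⟩
  · right
    obtain ⟨k, hk⟩ := hd
    have hk' : x * k = c ^ 2 := by
      have : q * (x * k) = q * c ^ 2 := by rw [← h, hk]; ring
      exact mul_left_cancel₀ hq.ne_zero this
    have hkpos : 0 < k := by nlinarith
    have hcoxk : IsCoprime x k := hco.of_isCoprime_of_dvd_right ⟨q, by rw [hk]; ring⟩
    obtain ⟨s, hs⟩ := sq_pos x hx (Int.sq_of_isCoprime hcoxk hk')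
    obtain ⟨r, hr⟩ := sq_pos k hkpos (Int.sq_of_isCoprime hcoxk.symm (by rw [mul_comm]; exact hk'))
    exact ⟨s, r, hs, by rw [hk, hr]⟩

lemma aux_cast8 {q k : ℤ} (hk : q = 8 * k + 7) : ((q : ZMod 8) : ZMod 8) = 7 := by
  rw [hk]; push_cast
  rw [show (8 : ZMod 8) = 0 by decide]; ring

lemma aux_descent (q A B : ℤ) (hq : Prime q) (hqpos : 0 < q) (hq8 : q % 8 = 7)
    (h1 : A ^ 2 - q * B ^ 2 = 1) (hA : 1 ≤ A) (hB : 1 ≤ B)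
    (hmin : ∀ s r : ℤ, s ^ 2 + q * r ^ 2 = A → 2 * s * r = B → False) :
    ∃ s : ℤ, A + 1 = s ^ 2 := by
  obtain ⟨k, hk⟩ : ∃ k, q = 8 * k + 7 := ⟨(q - 7) / 8, by omega⟩
  have hq7 : 7 ≤ q := by omega
  have hB2 : 1 ≤ B ^ 2 := by nlinarith
  have hA3 : 3 ≤ A := by nlinarith
  rcases Int.even_or_odd A with ⟨m, rfl⟩ | ⟨m, rfl⟩
  · -- A even
    have hfac : (m + m - 1) * (m + m + 1) = q * B ^ 2 := by linear_combination h1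
    have hco : IsCoprime (m + m - 1) (m + m + 1) := ⟨-(m + 1), m, by ring⟩
    rcases aux_fact q _ _ B hq hqpos (by omega) (by omega) hco hfac with
      ⟨s, r, h₁, h₂⟩ | ⟨s, r, h₁, h₂⟩
    · exact ⟨s, h₂⟩
    · exfalso
      have key : ∀ m s r : ZMod 8, ¬(m + m - 1 = s ^ 2 ∧ m + m + 1 = 7 * r ^ 2) := by decide
      refine key (m : ZMod 8) (s : ZMod 8) (r : ZMod 8) ⟨?_, ?_⟩
      · have := congrArg (Int.cast : ℤ → ZMod 8) h₁; push_cast at this; exact this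
      · have := congrArg (Int.cast : ℤ → ZMod 8) h₂; push_cast at this
        rwa [aux_cast8 hk] at this
  · -- A odd
    have hqodd : ¬ Even q := by rw [Int.even_iff]; omega
    have hBeven : Even B := by
      have hev : Even (q * B ^ 2) :=
        ⟨2 * (m ^ 2 + m), by linear_combination -h1⟩
      rcases Int.even_mul.mp hev with h | h
      · exact absurd h hqodd
      · exact (Int.even_pow.mp h).1
    obtain ⟨n, hn⟩ := hBeven
    have h4 : (4 : ℤ) * (m * (m + 1)) = 4 * (q * n ^ 2) := by
      rw [hn] at h1; linear_combination h1
    have hfac : m * (m + 1) = q * n ^ 2 := mul_left_cancel₀ (by norm_num) h4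
    have hco : IsCoprime m (m + 1) := ⟨-1, 1, by ring⟩
    rcases aux_fact q m (m + 1) n hq hqpos (by omega) (by omega) hco hfac with
      ⟨s, r, h₁, h₂⟩ | ⟨s, r, h₁, h₂⟩
    · -- m = q r^2, m + 1 = s^2 : contradiction with minimality
      exfalso
      have hsum : s ^ 2 + q * r ^ 2 = 2 * m + 1 := by linarith
      have hq2 : q * (r ^ 2 * s ^ 2) = q * n ^ 2 := by linear_combination hfac - s ^ 2 * h₁ - m * h₂
      have hrs : r ^ 2 * s ^ 2 = n ^ 2 := mul_left_cancel₀ hq.ne_zero hq2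
      have hz : (s * r - n) * (s * r + n) = 0 := by linear_combination hrs
      rcases mul_eq_zero.mp hz with hz | hz
      · exact hmin s r hsum (by linarith [hn])
      · refine hmin s (-r) (by rw [neg_sq]; exact hsum) ?_
        have hsr : s * r = -n := by linarith
        linear_combination (-2) * hsr - hn
    · -- m = s^2, m + 1 = q r^2 : contradiction mod 4
      exfalso
      have key : ∀ s r : ZMod 4, s ^ 2 + 1 ≠ 3 * r ^ 2 := by decide
      have heq : s ^ 2 + 1 = q * r ^ 2 := by linarith
      have := congrArg (Int.cast : ℤ → ZMod 4) heq; push_cast at this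
      rw [show ((q : ZMod 4)) = 3 by
        rw [hk]; push_cast; rw [show (8 : ZMod 4) = 0 by decide, zero_mul, zero_add]; decide] at this
      exact key _ _ this

lemma aux_norm_neg (q T E : ℤ) (hq8 : q % 8 = 7) (h : T ^ 2 - q * E ^ 2 = -4) : False := by
  obtain ⟨k, hk⟩ : ∃ k, q = 8 * k + 7 := ⟨(q - 7) / 8, by omega⟩
  have key : ∀ k t e : ZMod 16, t ^ 2 - (8 * k + 7) * e ^ 2 ≠ -4 := by decide
  rw [hk] at h
  have := congrArg (Int.cast : ℤ → ZMod 16) h; push_cast at this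
  exact key _ _ _ this

lemma aux_even (q T E : ℤ) (hq8 : q % 8 = 7) (h : T ^ 2 - q * E ^ 2 = 4) :
    Even T ∧ Even E := by
  obtain ⟨k, hk⟩ : ∃ k, q = 8 * k + 7 := ⟨(q - 7) / 8, by omega⟩
  have hT : Even T := by
    rcases Int.even_or_odd T with h' | ⟨u, hu⟩
    · exact h'
    exfalso
    have key : ∀ k u e : ZMod 8, (2 * u + 1) ^ 2 - (8 * k + 7) * e ^ 2 ≠ 4 := by decide
    rw [hu, hk] at h
    have := congrArg (Int.cast : ℤ → ZMod 8) h; push_cast at this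
    exact key _ _ _ this
  refine ⟨hT, ?_⟩
  obtain ⟨u, hu⟩ := hT
  rcases Int.even_or_odd E with h' | ⟨v, hv⟩
  · exact h'
  exfalso
  have key : ∀ k u v : ZMod 8, (u + u) ^ 2 - (8 * k + 7) * (2 * v + 1) ^ 2 ≠ 4 := by decide
  rw [hu, hv, hk] at h
  have := congrArg (Int.cast : ℤ → ZMod 8) h; push_cast at this
  exact key _ _ _ this


set_option maxHeartbeats 2000000 in
set_option synthInstance.maxHeartbeats 100000 in
/-- If `q` is a prime with `q ≡ 7 (mod 8)`, then the fundamental unit `ε` of `ℚ(√q)` has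
norm `+1` and the squarefree part of `Norm(ε+1)` equals `2`. -/
theorem m_eq_two_of_prime_seven_mod_eight
    (q : ℕ) (hq : q.Prime) (hq8 : q % 8 = 7)
    (K : IntermediateField ℚ ℝ) (hK : K = ℚ⟮(Real.sqrt q)⟯) [NumberField K]
    (ε : (𝓞 K)ˣ)
    (hfund : ∀ u : (𝓞 K)ˣ, ∃ n : ℤ, u = ε ^ n ∨ u = -ε ^ n)
    (hpos : 1 < (((ε : 𝓞 K) : K) : ℝ)) :
    Algebra.norm ℤ (ε : 𝓞 K) = 1 ∧
      ∃ s : ℤ, Algebra.norm ℤ ((ε : 𝓞 K) + 1) = 2 * s ^ 2 := by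
  subst hK
  have hq0 : (0:ℝ) ≤ q := by positivity
  have hsqth : (Real.sqrt (q:ℝ)) ^ 2 = (q : ℝ) := Real.sq_sqrt hq0
  have hirr : Irrational (Real.sqrt (q:ℝ)) := hq.irrational_sqrt
  have hint : IsIntegral ℚ (Real.sqrt (q:ℝ)) := by
    refine ⟨X ^ 2 - C (q:ℚ), monic_X_pow_sub_C _ two_ne_zero, ?_⟩
    rw [eval₂_sub, eval₂_pow, eval₂_X, eval₂_C]
    push_cast
    rw [hsqth]; ring
  have hmin : minpoly ℚ (Real.sqrt (q:ℝ)) = X ^ 2 - C (q:ℚ) := by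
    have hnotin : (Real.sqrt (q:ℝ)) ∉ (algebraMap ℚ ℝ).range := by
      rintro ⟨y, hy⟩
      exact hirr ⟨y, by rw [← hy]; exact (eq_ratCast (algebraMap ℚ ℝ) y).symm ▸ rfl⟩
    have hdvd : minpoly ℚ (Real.sqrt (q:ℝ)) ∣ X ^ 2 - C (q:ℚ) := minpoly.dvd ℚ (Real.sqrt (q:ℝ)) (by
      rw [map_sub, map_pow, aeval_X, aeval_C]
      push_cast
      rw [hsqth]; ring)
    have hmono : (minpoly ℚ (Real.sqrt (q:ℝ))).Monic := minpoly.monic hint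
    have hdeg2 : 2 ≤ (minpoly ℚ (Real.sqrt (q:ℝ))).natDegree := (minpoly.two_le_natDegree_iff hint).mpr hnotin
    obtain ⟨c, hc⟩ := hdvd
    have hcm : (X ^ 2 - C (q:ℚ)).natDegree = 2 := by
      rw [natDegree_X_pow_sub_C]
    have hc0 : c ≠ 0 := by
      rintro rfl
      rw [mul_zero] at hc
      exact (X_pow_sub_C_ne_zero (by norm_num) (q:ℚ)) hc
    have hdegc : c.natDegree = 0 := by
      have := natDegree_mul (hmono.ne_zero) hc0
      rw [← hc, hcm] at this
      omega
    have hcmonic : c.leadingCoeff = 1 := by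
      have := (monic_X_pow_sub_C (q:ℚ) (two_ne_zero (α := ℕ))).leadingCoeff
      rw [hc, leadingCoeff_mul, hmono.leadingCoeff, one_mul] at this
      exact this
    have h0 : c.coeff 0 = 1 := by rwa [Polynomial.leadingCoeff, hdegc] at hcmonic
    have : c = 1 := by rw [eq_C_of_natDegree_eq_zero hdegc, h0, map_one]
    rw [hc, this, mul_one]
  -- power basis
  set pb : PowerBasis ℚ ℚ⟮(Real.sqrt (q:ℝ))⟯ := IntermediateField.adjoin.powerBasis hint with hpbdef
  set g : ℚ⟮(Real.sqrt (q:ℝ))⟯ := AdjoinSimple.gen ℚ (Real.sqrt (q:ℝ)) with hgdef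
  have hdim : pb.dim = 2 := by
    rw [hpbdef, IntermediateField.adjoin.powerBasis_dim, hmin, natDegree_X_pow_sub_C]
  set B := pb.basis.reindex (finCongr hdim) with hBdef
  have hB0 : B 0 = 1 := by
    rw [hBdef, Module.Basis.reindex_apply, pb.basis_eq_pow]
    rw [show pb.gen = g from by rw [hpbdef, hgdef]; exact IntermediateField.adjoin.powerBasis_gen hint]
    norm_num
  have hB1 : B 1 = g := by
    rw [hBdef, Module.Basis.reindex_apply, pb.basis_eq_pow]
    rw [show pb.gen = g from by rw [hpbdef, hgdef]; exact IntermediateField.adjoin.powerBasis_gen hint]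
    norm_num
  have hgcoe : (g : ℝ) = (Real.sqrt (q:ℝ)) := IntermediateField.AdjoinSimple.coe_gen ℚ (Real.sqrt (q:ℝ))
  have hg2' : g * g = algebraMap ℚ ℚ⟮(Real.sqrt (q:ℝ))⟯ (q : ℚ) := by
    apply Subtype.ext
    rw [MulMemClass.coe_mul, hgcoe]
    rw [show ((algebraMap ℚ ℚ⟮(Real.sqrt (q:ℝ))⟯ (q:ℚ) : ℚ⟮(Real.sqrt (q:ℝ))⟯) : ℝ) = ((q:ℚ):ℝ) from rfl]
    push_cast
    linear_combination hsqth
  -- coordinates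
  have hco : ∀ u v : ℚ, B.repr (u • (1 : ℚ⟮(Real.sqrt (q:ℝ))⟯) + v • g) 0 = u
      ∧ B.repr (u • (1 : ℚ⟮(Real.sqrt (q:ℝ))⟯) + v • g) 1 = v := by
    intro u v
    rw [← hB0, ← hB1]
    constructor <;>
      simp [Finsupp.single_apply]
  have hmul : ∀ u v : ℚ, (u • (1 : ℚ⟮(Real.sqrt (q:ℝ))⟯) + v • g) * g = (v * q) • (1 : ℚ⟮(Real.sqrt (q:ℝ))⟯) + u • g := by
    intro u v
    rw [Algebra.smul_def, Algebra.smul_def, Algebra.smul_def, Algebra.smul_def, map_mul]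
    linear_combination (algebraMap ℚ ℚ⟮(Real.sqrt (q:ℝ))⟯ v) * hg2'
  have hnormQ : ∀ u v : ℚ, Algebra.norm ℚ (u • (1 : ℚ⟮(Real.sqrt (q:ℝ))⟯) + v • g) = u ^ 2 - q * v ^ 2 := by
    intro u v
    rw [Algebra.norm_eq_matrix_det B, Matrix.det_fin_two]
    rw [Algebra.leftMulMatrix_eq_repr_mul, Algebra.leftMulMatrix_eq_repr_mul,
      Algebra.leftMulMatrix_eq_repr_mul, Algebra.leftMulMatrix_eq_repr_mul,
      hB0, hB1, mul_one, hmul u v]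
    rw [(hco u v).1, (hco u v).2, (hco (v*q) u).1, (hco (v*q) u).2]
    ring
  have htraceQ : ∀ u v : ℚ, Algebra.trace ℚ ℚ⟮(Real.sqrt (q:ℝ))⟯ (u • (1 : ℚ⟮(Real.sqrt (q:ℝ))⟯) + v • g) = 2 * u := by
    intro u v
    rw [Algebra.trace_eq_matrix_trace B, Matrix.trace_fin_two]
    rw [Algebra.leftMulMatrix_eq_repr_mul, Algebra.leftMulMatrix_eq_repr_mul,
      hB0, hB1, mul_one, hmul u v]
    rw [(hco u v).1, (hco (v*q) u).2]
    ring
  -- coordinates of ε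
  set εO : 𝓞 ℚ⟮(Real.sqrt (q:ℝ))⟯ := (ε : 𝓞 ℚ⟮(Real.sqrt (q:ℝ))⟯) with hεOdef
  set a : ℚ := B.repr (εO : ℚ⟮(Real.sqrt (q:ℝ))⟯) 0 with hadef
  set b : ℚ := B.repr (εO : ℚ⟮(Real.sqrt (q:ℝ))⟯) 1 with hbdef
  have hεK : (εO : ℚ⟮(Real.sqrt (q:ℝ))⟯) = a • (1 : ℚ⟮(Real.sqrt (q:ℝ))⟯) + b • g := by
    conv_lhs => rw [← B.sum_repr (εO : ℚ⟮(Real.sqrt (q:ℝ))⟯)]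
    rw [Fin.sum_univ_two, hB0, hB1, hadef, hbdef]
  set T : ℤ := Algebra.trace ℤ _ εO with hTdef
  have hT : (T : ℚ) = 2 * a := by
    rw [hTdef, Algebra.coe_trace_int, hεK, htraceQ]
  set N : ℤ := Algebra.norm ℤ εO with hNdef
  have hNcast : (N : ℚ) = a ^ 2 - q * b ^ 2 := by
    rw [hNdef, Algebra.coe_norm_int, hεK, hnormQ]
  have hNunit : N = 1 ∨ N = -1 := Int.isUnit_iff.mp (ε.isUnit.map (Algebra.norm ℤ))
  have hqQ : ((q : ℚ)) ≠ 0 := by exact_mod_cast hq.ne_zero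
  -- the coordinates are (half-)integers
  have heq : (T : ℚ) ^ 2 - 4 * (N : ℚ) = (q : ℚ) * (2 * b) ^ 2 := by
    linear_combination ((T : ℚ) + 2 * a) * hT - 4 * hNcast
  obtain ⟨D, hD⟩ : ∃ D : ℤ, (D : ℚ) = (q : ℚ) * (2 * b) := by
    apply aux_rat_int_of_sq _ ((q : ℤ) * (T ^ 2 - 4 * N))
    push_cast
    linear_combination (-(q : ℚ)) * heq
  have hD2 : D ^ 2 = (q : ℤ) * (T ^ 2 - 4 * N) := by
    have : (D : ℚ) ^ 2 = (((q : ℤ) * (T ^ 2 - 4 * N) : ℤ) : ℚ) := by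
      rw [hD]; push_cast; linear_combination (-(q : ℚ)) * heq
    exact_mod_cast this
  have hqp : Prime (q : ℤ) := Nat.prime_iff_prime_int.1 hq
  obtain ⟨E, hE⟩ : (q : ℤ) ∣ D := hqp.dvd_of_dvd_pow (⟨T ^ 2 - 4 * N, hD2⟩ : (q:ℤ) ∣ D ^ 2)
  have hEb : (E : ℚ) = 2 * b := by
    have h' : ((q : ℚ)) * (E : ℚ) = (q : ℚ) * (2 * b) := by
      rw [← hD, hE]; push_cast; ring
    exact mul_left_cancel₀ hqQ h'
  have hTE : T ^ 2 - (q : ℤ) * E ^ 2 = 4 * N := by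
    have : (T : ℚ) ^ 2 - (q : ℚ) * (E : ℚ) ^ 2 = 4 * (N : ℚ) := by
      rw [hEb]; linear_combination heq
    exact_mod_cast this
  have hq8' : (q : ℤ) % 8 = 7 := by omega
  -- norm is +1
  have hN1 : N = 1 := by
    rcases hNunit with h | h
    · exact h
    · exact absurd (by rw [h] at hTE; linarith [hTE] : T ^ 2 - (q:ℤ) * E ^ 2 = -4)
        (fun hh => aux_norm_neg (q:ℤ) T E hq8' hh)
  rw [hN1, mul_one] at hTE  -- hTE : T^2 - q E^2 = 4
  obtain ⟨⟨A', hu⟩, ⟨B', hv⟩⟩ := aux_even (q:ℤ) T E hq8' hTE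
  have hAB : A' ^ 2 - (q : ℤ) * B' ^ 2 = 1 := by
    have h4 : (4 : ℤ) * (A' ^ 2 - (q:ℤ) * B' ^ 2) = 4 * 1 := by
      rw [hu, hv] at hTE; linear_combination hTE
    exact mul_left_cancel₀ (by norm_num) h4
  have ha : a = (A' : ℚ) := by
    rw [hu] at hT; push_cast at hT; linarith
  have hb : b = (B' : ℚ) := by
    rw [hv] at hEb; push_cast at hEb; linarith
  -- real picture
  have hposth : 0 < (Real.sqrt (q:ℝ)) := Real.sqrt_pos.mpr (by exact_mod_cast hq.pos)
  have hereal : ((εO : ℚ⟮(Real.sqrt (q:ℝ))⟯) : ℝ) = (A' : ℝ) + (B' : ℝ) * (Real.sqrt (q:ℝ)) := by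
    rw [hεK, ha, hb]
    push_cast [IntermediateField.coe_smul, hgcoe, Rat.smul_def]
    ring
  have hABR : (A' : ℝ) ^ 2 - (q : ℝ) * (B' : ℝ) ^ 2 = 1 := by exact_mod_cast hAB
  have hposR : 1 < (A' : ℝ) + (B' : ℝ) * (Real.sqrt (q:ℝ)) := by rw [← hereal]; exact hpos
  have hinv : ((A' : ℝ) - (B' : ℝ) * (Real.sqrt (q:ℝ))) * ((A' : ℝ) + (B' : ℝ) * (Real.sqrt (q:ℝ))) = 1 := by
    linear_combination hABR - (B' : ℝ) ^ 2 * hsqth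
  have hinvpos : 0 < (A' : ℝ) - (B' : ℝ) * (Real.sqrt (q:ℝ)) := by nlinarith
  have hinvlt : (A' : ℝ) - (B' : ℝ) * (Real.sqrt (q:ℝ)) < 1 := by nlinarith
  have hA'1 : 1 ≤ A' := by
    have : (0 : ℝ) < (A' : ℝ) := by nlinarith
    exact_mod_cast Int.cast_pos.mp this
  have hB'1 : 1 ≤ B' := by
    have : (0 : ℝ) < (B' : ℝ) := by nlinarith
    exact_mod_cast Int.cast_pos.mp this
  -- the element √q as an algebraic integer
  have hgint : IsIntegral ℤ g := by
    refine ⟨X ^ 2 - C (q : ℤ), monic_X_pow_sub_C _ two_ne_zero, ?_⟩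
    have hcast : (algebraMap ℤ ℚ⟮(Real.sqrt (q:ℝ))⟯) (q : ℤ) = algebraMap ℚ ℚ⟮(Real.sqrt (q:ℝ))⟯ (q : ℚ) := by
      rw [map_natCast, map_natCast]
    rw [eval₂_sub, eval₂_pow, eval₂_X, eval₂_C]
    rw [hcast, pow_two, hg2', sub_self]
  set gO : 𝓞 ℚ⟮(Real.sqrt (q:ℝ))⟯ := ⟨g, hgint⟩ with hgOdef
  -- minimality: ε has no square root
  have hmin : ∀ s r : ℤ, s ^ 2 + (q:ℤ) * r ^ 2 = A' → 2 * s * r = B' → False := by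
    intro s r h₁ h₂
    set η : 𝓞 ℚ⟮(Real.sqrt (q:ℝ))⟯ := (s : 𝓞 ℚ⟮(Real.sqrt (q:ℝ))⟯) + (r : 𝓞 ℚ⟮(Real.sqrt (q:ℝ))⟯) * gO with hηdef
    have hηK : (η : ℚ⟮(Real.sqrt (q:ℝ))⟯)
        = (s : ℚ⟮(Real.sqrt (q:ℝ))⟯) + (r : ℚ⟮(Real.sqrt (q:ℝ))⟯) * g := by
      rw [hηdef, NumberField.RingOfIntegers.coe_eq_algebraMap, map_add, map_mul,
        map_intCast, map_intCast, hgOdef, NumberField.RingOfIntegers.map_mk g hgint]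
    have hηR : ((η : ℚ⟮(Real.sqrt (q:ℝ))⟯) : ℝ) = (s : ℝ) + (r : ℝ) * (Real.sqrt (q:ℝ)) := by
      rw [hηK]
      push_cast [hgcoe]
      ring
    have hsqη : η ^ 2 = εO := by
      apply NumberField.RingOfIntegers.ext
      apply Subtype.ext
      rw [show ((η ^ 2 : 𝓞 ℚ⟮(Real.sqrt (q:ℝ))⟯) : ℚ⟮(Real.sqrt (q:ℝ))⟯)
        = ((η : ℚ⟮(Real.sqrt (q:ℝ))⟯)) ^ 2 from map_pow (algebraMap _ _) η 2, hηK]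
      rw [show ((((s : ℚ⟮(Real.sqrt (q:ℝ))⟯) + (r : ℚ⟮(Real.sqrt (q:ℝ))⟯) * g) ^ 2 :
          ℚ⟮(Real.sqrt (q:ℝ))⟯) : ℝ) = ((s : ℝ) + (r : ℝ) * (Real.sqrt (q:ℝ))) ^ 2 from by
        push_cast [hgcoe]; ring]
      rw [show (((εO : ℚ⟮(Real.sqrt (q:ℝ))⟯)) : ℝ) = (A' : ℝ) + (B' : ℝ) * (Real.sqrt (q:ℝ)) from hereal]
      have h₁R : (s : ℝ) ^ 2 + (q : ℝ) * (r : ℝ) ^ 2 = (A' : ℝ) := by exact_mod_cast congrArg (Int.cast : ℤ → ℝ) h₁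
      have h₂R : 2 * (s : ℝ) * (r : ℝ) = (B' : ℝ) := by exact_mod_cast congrArg (Int.cast : ℤ → ℝ) h₂
      linear_combination (r : ℝ) ^ 2 * hsqth + h₁R + (Real.sqrt (q:ℝ)) * h₂R
    have hunit : IsUnit η := by
      apply IsUnit.of_mul_eq_one (a := η) (η * ((ε⁻¹ : (𝓞 ℚ⟮(Real.sqrt (q:ℝ))⟯)ˣ) : 𝓞 ℚ⟮(Real.sqrt (q:ℝ))⟯))
      rw [← mul_assoc, ← pow_two, hsqη, hεOdef]
      exact ε.mul_inv
    have hηU2 : hunit.unit ^ 2 = ε := by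
      apply Units.ext
      rw [Units.val_pow_eq_pow_val, IsUnit.unit_spec, hsqη, hεOdef]
    obtain ⟨n, hn | hn⟩ := hfund hunit.unit <;>
    · have hkey : ε ^ (n + n) = ε := by
        conv_rhs => rw [← hηU2, hn]
        first
        | (rw [sq, ← zpow_add])
        | (rw [neg_sq, sq, ← zpow_add])
      have hone : ε ^ (n + n - 1) = 1 := by
        rw [zpow_sub, zpow_one, hkey]
        first
        | exact mul_inv_cancel _
        | exact mul_right_inv _
        | simp
      set φ : 𝓞 ℚ⟮(Real.sqrt (q:ℝ))⟯ →+* ℝ :=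
        (algebraMap ℚ⟮(Real.sqrt (q:ℝ))⟯ ℝ).comp (algebraMap (𝓞 ℚ⟮(Real.sqrt (q:ℝ))⟯) ℚ⟮(Real.sqrt (q:ℝ))⟯) with hφdef
      have h1 : (Units.map φ.toMonoidHom ε) ^ (n + n - 1) = 1 := by
        rw [← map_zpow, hone, map_one]
      have hval : ((Units.map φ.toMonoidHom ε : ℝˣ) : ℝ) = ((εO : ℚ⟮(Real.sqrt (q:ℝ))⟯) : ℝ) := rfl
      have h2 : (((εO : ℚ⟮(Real.sqrt (q:ℝ))⟯)) : ℝ) ^ (n + n - 1) = 1 := by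
        have hv := congrArg (Units.val) h1
        rwa [Units.val_zpow_eq_zpow_val, hval, Units.val_one] at hv
      have hgt : (1:ℝ) < ((εO : ℚ⟮(Real.sqrt (q:ℝ))⟯) : ℝ) := hpos
      have hinj := (zpow_right_strictMono₀ hgt).injective (a₁ := n + n - 1) (a₂ := 0)
        (by rw [zpow_zero]; exact h2)
      omega
  obtain ⟨sfin, hsfin⟩ := aux_descent (q:ℤ) A' B' hqp (by exact_mod_cast hq.pos) hq8' hAB hA'1 hB'1 hmin
  refine ⟨hN1, ⟨sfin, ?_⟩⟩
  have hadd : ((εO + 1 : 𝓞 ℚ⟮(Real.sqrt (q:ℝ))⟯) : ℚ⟮(Real.sqrt (q:ℝ))⟯)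
      = (a + 1) • (1 : ℚ⟮(Real.sqrt (q:ℝ))⟯) + b • g := by
    rw [NumberField.RingOfIntegers.coe_eq_algebraMap, map_add, map_one,
      ← NumberField.RingOfIntegers.coe_eq_algebraMap, hεK, add_smul, one_smul]
    exact add_right_comm _ _ _
  have hcoe : ((Algebra.norm ℤ (εO + 1) : ℤ) : ℚ) = (a + 1) ^ 2 - q * b ^ 2 := by
    rw [Algebra.coe_norm_int, hadd, hnormQ]
  have hsQ : (A' : ℚ) + 1 = (sfin : ℚ) ^ 2 := by exact_mod_cast congrArg (Int.cast : ℤ → ℚ) hsfin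
  have hABQ : (A' : ℚ) ^ 2 - (q : ℚ) * (B' : ℚ) ^ 2 = 1 := by exact_mod_cast hAB
  have hfin : ((Algebra.norm ℤ (εO + 1) : ℤ) : ℚ) = ((2 * sfin ^ 2 : ℤ) : ℚ) := by
    rw [hcoe, ha, hb]; push_cast; linear_combination hABQ + 2 * hsQ
  exact_mod_cast hfin
end

section
/- Let q₁, q₂ be distinct primes with q₁ ≡ q₂ ≡ 3 (mod 4), and let m be the squarefree-part invariant of the fundamental unit of ℚ(√(q₁q₂)) (so m ∈ {q₁, q₂}). Then m = q₁ if and only if q₁ is a quadratic residue mod q₂, and m = q₂ if and only if q₁ is a non-residue mod q₂. -/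
open Polynomial IntermediateField NumberField

private lemma exists_int_of_sq (d : ℤ) (hd : Squarefree d) (r : ℚ) (M : ℤ)
    (h : (d : ℚ) * r ^ 2 = (M : ℚ)) : ∃ y : ℤ, (y : ℚ) = r := by
  have hden0 : (r.den : ℚ) ≠ 0 := by exact_mod_cast r.den_ne_zero
  rw [← Rat.num_div_den r] at h
  field_simp at h
  have hZ : d * r.num ^ 2 = M * (r.den : ℤ) ^ 2 := by rw [mul_comm M]; exact_mod_cast h
  have hcop : IsCoprime (r.den : ℤ) r.num := by
    rw [Int.isCoprime_iff_gcd_eq_one, Int.gcd]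
    simpa [Nat.coprime_comm] using r.reduced
  have hdvd : ((r.den : ℤ)) ^ 2 ∣ d * r.num ^ 2 := by
    rw [hZ]; exact Dvd.intro_left M rfl
  have hdvd2 : ((r.den : ℤ)) ^ 2 ∣ d := (IsCoprime.pow hcop).dvd_of_dvd_mul_right hdvd
  have hunit : IsUnit ((r.den : ℤ)) := hd _ (by rwa [← sq])
  have hden1 : r.den = 1 := by
    rcases Int.isUnit_iff.1 hunit with h1 | h1 <;> omega
  exact ⟨r.num, by rw [← Rat.num_div_den r, hden1]; simp⟩

private lemma int_zero_of_zpow_eq_one {e : ℝ} (he : 1 < e) {k : ℤ} (h : e ^ k = 1) : k = 0 :=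
  zpow_right_injective₀ (by linarith) (by linarith) (h.trans (zpow_zero e).symm)

private lemma odd_sq_mod_four {y : ℕ} (hy : y % 2 = 1) : y ^ 2 % 4 = 1 := by
  obtain ⟨t, rfl⟩ : ∃ t, y = 2 * t + 1 := ⟨y / 2, by omega⟩
  have : (2 * t + 1) ^ 2 = 4 * (t * t + t) + 1 := by ring
  omega

private lemma prime_dvd_aux (q₁ q₂ : ℕ) (hq₁ : q₁.Prime) (hq₂ : q₂.Prime)
    (hq₁4 : q₁ % 4 = 3) (hq₂4 : q₂ % 4 = 3)
    (m X y s : ℕ) (hmsf : Squarefree m) (hX : 5 ≤ X) (hy : y ≠ 0)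
    (hprod : X * (X - 4) = q₁ * q₂ * y ^ 2) (hms : m * s ^ 2 = X)
    (p : ℕ) (hp : p.Prime) (hpm : p ∣ m) : p ∣ q₁ * q₂ := by
  have hs0 : s ≠ 0 := by rintro rfl; simp at hms; omega
  have hm0 : m ≠ 0 := hmsf.ne_zero
  have hX0 : X ≠ 0 := by omega
  have hd0 : q₁ * q₂ ≠ 0 := Nat.mul_ne_zero hq₁.pos.ne' hq₂.pos.ne'
  have hy2 : y ^ 2 ≠ 0 := pow_ne_zero _ hy
  have hB0 : X - 4 ≠ 0 := by
    intro h
    rw [h, Nat.mul_zero] at hprod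
    exact (Nat.mul_ne_zero hd0 hy2) hprod.symm
  -- factorization of m at p is 1
  have hfm : m.factorization p = 1 :=
    le_antisymm (hmsf.natFactorization_le_one p)
      (hp.factorization_pos_of_dvd hm0 hpm)
  have hfX : X.factorization p = 1 + 2 * s.factorization p := by
    rw [← hms, Nat.factorization_mul hm0 (pow_ne_zero 2 hs0), Nat.factorization_pow]
    simp [hfm, mul_comm]
  have hkey : ∀ r : ℕ, X.factorization r + (X - 4).factorization r
      = (q₁ * q₂).factorization r + 2 * y.factorization r := by
    intro r
    have h1 := congrArg (fun f : ℕ →₀ ℕ => f r)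
      (congrArg Nat.factorization hprod)
    simpa [Nat.factorization_mul hX0 hB0, Nat.factorization_mul hd0 hy2,
      Nat.factorization_pow, mul_comm] using h1
  by_contra hpd
  have hp2 : p = 2 := by
    by_contra hp2
    have hpX : p ∣ X := hpm.trans ⟨s ^ 2, hms.symm⟩
    have hpB : ¬ p ∣ (X - 4) := by
      intro hd
      have h4 : p ∣ 4 := by
        have := Nat.dvd_sub hpX hd
        simpa [show X - (X - 4) = 4 by omega] using this
      have hple : p ≤ 4 := Nat.le_of_dvd (by norm_num) h4
      have hp2' := hp.two_le
      interval_cases p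
      · exact hp2 rfl
      · omega
      · exact absurd hp (by norm_num)
    have e1 := hkey p
    rw [hfX, Nat.factorization_eq_zero_of_not_dvd hpB,
      Nat.factorization_eq_zero_of_not_dvd hpd] at e1
    omega
  subst hp2
  -- now 2 ∣ m, derive contradiction
  have hd2 : ¬ (2 : ℕ) ∣ q₁ * q₂ := hpd
  have e1 := hkey 2
  rw [hfX, Nat.factorization_eq_zero_of_not_dvd hd2] at e1
  -- (X-4).factorization 2 is odd
  have hB2 : (X - 4).factorization 2 % 2 = 1 := by omega
  have h2X : (2:ℕ) ∣ X := Nat.dvd_of_factorization_pos (by omega)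
  have h2B : (2:ℕ) ∣ (X - 4) := Nat.dvd_of_factorization_pos (by omega)
  have h2y : (1:ℕ) ≤ y.factorization 2 := by omega
  have h2ydvd : (2:ℕ) ∣ y := Nat.dvd_of_factorization_pos (by omega)
  obtain ⟨c, rfl⟩ := h2X
  obtain ⟨y₀, rfl⟩ := h2ydvd
  have hc3 : 3 ≤ c := by omega
  obtain ⟨b, rfl⟩ : ∃ b, c = b + 2 := ⟨c - 2, by omega⟩
  have hy₀ : y₀ ≠ 0 := by simpa using hy
  have hb1 : 1 ≤ b := by omega
  -- reduce the product equation
  have hcc : (b + 2) * b = q₁ * q₂ * y₀ ^ 2 := by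
    have h4 : 4 * ((b + 2) * b) = 4 * (q₁ * q₂ * y₀ ^ 2) := by
      calc 4 * ((b + 2) * b) = (2 * (b + 2)) * (2 * (b + 2) - 4) := by
            have h24 : 2 * (b+2) - 4 = 2*b := by omega
            rw [h24]; ring
        _ = q₁ * q₂ * (2 * y₀) ^ 2 := hprod
        _ = 4 * (q₁ * q₂ * y₀ ^ 2) := by ring
    exact Nat.eq_of_mul_eq_mul_left (by norm_num) h4
  -- factorization facts
  have hfb2 : (b + 2).factorization 2 % 2 = 0 := by
    have h' : (2 * (b + 2)).factorization 2 = 1 + (b+2).factorization 2 := by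
      rw [Nat.factorization_mul (by norm_num) (by omega)]
      simp [Nat.Prime.factorization_self Nat.prime_two]
    omega
  have hfb : b.factorization 2 % 2 = 0 := by
    have h' : (2 * b).factorization 2 = 1 + b.factorization 2 := by
      rw [Nat.factorization_mul (by norm_num) (by omega)]
      simp [Nat.Prime.factorization_self Nat.prime_two]
    have hXb : 2 * (b + 2) - 4 = 2 * b := by omega
    rw [hXb] at hB2
    omega
  rcases Nat.even_or_odd b with hbe | hbo
  · -- b even : both b, b+2 have even 2-valuation ⇒ 4 ∣ b and 4 ∣ b + 2
    have h2b : (2:ℕ) ∣ b := hbe.two_dvd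
    have h4b : (4:ℕ) ∣ b := by
      have h1 : 1 ≤ b.factorization 2 := Nat.Prime.factorization_pos_of_dvd Nat.prime_two (by omega) h2b
      have : (2:ℕ) ^ 2 ∣ b := (Nat.Prime.pow_dvd_iff_le_factorization Nat.prime_two (by omega)).2 (by omega)
      simpa using this
    have h4b2 : (4:ℕ) ∣ b + 2 := by
      have h2b2 : (2:ℕ) ∣ b + 2 := by omega
      have h1 : 1 ≤ (b+2).factorization 2 := Nat.Prime.factorization_pos_of_dvd Nat.prime_two (by omega) h2b2
      have : (2:ℕ) ^ 2 ∣ b + 2 := (Nat.Prime.pow_dvd_iff_le_factorization Nat.prime_two (by omega)).2 (by omega)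
      simpa using this
    omega
  · -- b odd : product ≡ 3 mod 4 but RHS ≡ 1 mod 4
    have hbodd : b % 2 = 1 := Nat.odd_iff.1 hbo
    have hy₀odd : y₀ % 2 = 1 := by
      by_contra hcon
      have h2t : (2:ℕ) ∣ y₀ := by omega
      have hdd : (2:ℕ) ∣ (b + 2) * b := by
        rw [hcc]
        exact dvd_mul_of_dvd_right (h2t.trans (dvd_pow_self y₀ two_ne_zero)) _
      have hmod : ((b + 2) * b) % 2 = 1 := by
        have hb2' : (b + 2) % 2 = 1 := by omega
        rw [Nat.mul_mod, hb2', hbodd]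
      rw [Nat.dvd_iff_mod_eq_zero] at hdd
      exact one_ne_zero (hmod.symm.trans hdd)
    have hlhs : ((b + 2) * b) % 4 = 3 := by
      rw [Nat.mul_mod, Nat.add_mod]
      have : b % 4 = 1 ∨ b % 4 = 3 := by omega
      rcases this with h | h <;> rw [h] <;> norm_num
    have hrhs : (q₁ * q₂ * y₀ ^ 2) % 4 = 1 := by
      rw [Nat.mul_mod, Nat.mul_mod q₁ q₂, hq₁4, hq₂4, odd_sq_mod_four hy₀odd]
    rw [hcc] at hlhs
    exact absurd (hlhs.symm.trans hrhs) (by norm_num)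

private lemma sf_dvd_of_primes {m n : ℕ} (hm : Squarefree m) (hn : n ≠ 0)
    (h : ∀ p : ℕ, p.Prime → p ∣ m → p ∣ n) : m ∣ n := by
  rw [← Nat.factorization_le_iff_dvd hm.ne_zero hn]
  intro p
  by_cases hp : p.Prime
  · by_cases hpm : p ∣ m
    · have h1 : m.factorization p ≤ 1 := hm.natFactorization_le_one p
      have h2 : 1 ≤ n.factorization p :=
        (Nat.Prime.factorization_pos_of_dvd hp hn (h p hp hpm))
      omega
    · simp [Nat.factorization_eq_zero_of_not_dvd hpm]
  · simp [Nat.factorization_eq_zero_of_not_prime _ hp]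

private lemma eq_cases_of_dvd_mul {m q₁ q₂ : ℕ} (hq₁ : q₁.Prime) (hq₂ : q₂.Prime)
    (hne : q₁ ≠ q₂) (h : m ∣ q₁ * q₂) :
    m = 1 ∨ m = q₁ ∨ m = q₂ ∨ m = q₁ * q₂ := by
  by_cases h1 : q₁ ∣ m <;> by_cases h2 : q₂ ∣ m
  · right; right; right
    refine Nat.dvd_antisymm h ?_
    exact (Nat.Coprime.mul_dvd_of_dvd_of_dvd ((Nat.coprime_primes hq₁ hq₂).2 hne) h1 h2)
  · right; left
    obtain ⟨t, rfl⟩ := h1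
    have ht : t ∣ q₂ := by
      have := (mul_dvd_mul_iff_left hq₁.pos.ne').1 h
      exact this
    rcases (Nat.Prime.eq_one_or_self_of_dvd hq₂ t ht) with rfl | rfl
    · simp
    · exact absurd (dvd_mul_left t q₁) h2
  · right; right; left
    obtain ⟨t, rfl⟩ := h2
    have ht : t ∣ q₁ := by
      have h' : q₂ * t ∣ q₂ * q₁ := by rwa [mul_comm q₁ q₂] at h
      exact (mul_dvd_mul_iff_left hq₂.pos.ne').1 h'
    rcases (Nat.Prime.eq_one_or_self_of_dvd hq₁ t ht) with rfl | rfl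
    · simp [mul_comm]
    · exact absurd (dvd_mul_left t q₂) h1
  · left
    by_contra hm1
    obtain ⟨p, hp, hpm⟩ := Nat.exists_prime_and_dvd hm1
    rcases (Nat.Prime.dvd_mul hp).1 (hpm.trans h) with hd | hd
    · exact h1 (((Nat.prime_dvd_prime_iff_eq hp hq₁).1 hd) ▸ hpm)
    · exact h2 (((Nat.prime_dvd_prime_iff_eq hp hq₂).1 hd) ▸ hpm)

private lemma isSquare_of_rep (q₁ q₂ : ℕ) (hq₁ : q₁.Prime) (hq₂ : q₂.Prime)
    (hq₂4 : q₂ % 4 = 3)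
    (x y s : ℤ) (hx : 3 ≤ x) (hy : y ≠ 0) (hs : s ≠ 0)
    (hprod : (x + 2) * (x - 2) = (q₁ : ℤ) * q₂ * y ^ 2)
    (hms : (q₁ : ℤ) * s ^ 2 = x + 2) :
    IsSquare ((q₁ : ZMod q₂)) := by
  haveI : Fact q₂.Prime := ⟨hq₂⟩
  have hq₁0 : ((q₁ : ℤ)) ≠ 0 := Int.natCast_ne_zero.2 hq₁.pos.ne'
  have hkey : s ^ 2 * (x - 2) = (q₂ : ℤ) * y ^ 2 := by
    have h' : (q₁ : ℤ) * (s ^ 2 * (x - 2)) = (q₁ : ℤ) * ((q₂:ℤ) * y ^ 2) := by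
      rw [← hms] at hprod; linear_combination hprod
    exact mul_left_cancel₀ hq₁0 h'
  -- q₂ does not divide s
  have hq₂s : ¬ ((q₂ : ℤ)) ∣ s := by
    intro hdvd
    have h1 : ((q₂:ℤ)) ∣ x + 2 := by
      rw [← hms]; exact Dvd.dvd.mul_left (hdvd.trans (dvd_pow_self s two_ne_zero)) _
    have h2 : ¬ ((q₂:ℤ)) ∣ (x - 2) := by
      intro h
      have h4 : ((q₂:ℤ)) ∣ 4 := by
        have := dvd_sub h1 h
        simpa [show x + 2 - (x - 2) = 4 by ring] using this
      have h4' : q₂ ∣ 4 := by exact_mod_cast h4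
      have : q₂ ≤ 4 := Nat.le_of_dvd (by norm_num) h4'
      have := hq₂.two_le
      interval_cases q₂
      · omega
      · omega
      · omega
    -- valuation contradiction
    have hx2 : x - 2 ≠ 0 := by omega
    have hN : s.natAbs ^ 2 * (x - 2).natAbs = q₂ * y.natAbs ^ 2 := by
      have := congrArg Int.natAbs hkey
      simpa [Int.natAbs_mul, Int.natAbs_pow] using this
    have hfs : (s.natAbs ^ 2 * (x - 2).natAbs).factorization q₂
        = 2 * s.natAbs.factorization q₂ := by
      rw [Nat.factorization_mul (pow_ne_zero _ (Int.natAbs_ne_zero.2 hs)) (Int.natAbs_ne_zero.2 hx2),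
        Nat.factorization_pow]
      have h0 : (x - 2).natAbs.factorization q₂ = 0 := by
        apply Nat.factorization_eq_zero_of_not_dvd
        intro hd
        exact h2 (Int.dvd_natAbs.1 (Int.natCast_dvd_natCast.2 hd))
      simp [h0, mul_comm]
    have hfr : (q₂ * y.natAbs ^ 2).factorization q₂
        = 1 + 2 * y.natAbs.factorization q₂ := by
      rw [Nat.factorization_mul hq₂.pos.ne' (pow_ne_zero _ (Int.natAbs_ne_zero.2 hy)),
        Nat.factorization_pow]
      simp [Nat.Prime.factorization_self hq₂, mul_comm]
    rw [hN, hfr] at hfs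
    omega
  -- conclude in ZMod q₂
  have hsZ : ((s : ZMod q₂)) ≠ 0 := by
    rwa [Ne, ZMod.intCast_zmod_eq_zero_iff_dvd]
  have hx2Z : ((x : ZMod q₂)) = 2 := by
    have hc := congrArg (fun t : ℤ => (t : ZMod q₂)) hkey
    push_cast at hc
    rw [ZMod.natCast_self] at hc
    simp only [zero_mul] at hc
    rcases mul_eq_zero.1 hc with h | h
    · exact absurd (pow_eq_zero_iff two_ne_zero |>.1 h) hsZ
    · linear_combination h
  have hfin : ((q₁ : ZMod q₂)) * ((s : ZMod q₂)) ^ 2 = 4 := by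
    have hc := congrArg (fun t : ℤ => (t : ZMod q₂)) hms
    push_cast at hc
    rw [hx2Z] at hc
    norm_num at hc
    linear_combination hc
  refine ⟨2 * ((s : ZMod q₂))⁻¹, ?_⟩
  field_simp
  linear_combination hfin


section
variable (d : ℕ)

private lemma sqq (hd0 : (1:ℕ) < d) : (Real.sqrt d) ^ 2 = (d:ℝ) :=
  Real.sq_sqrt (by positivity)

private lemma isInt (hd0 : (1:ℕ) < d) : IsIntegral ℚ (Real.sqrt d) := by
  refine ⟨X ^ 2 - C (d:ℚ), monic_X_pow_sub_C _ (by norm_num), ?_⟩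
  simp [sqq d hd0]

private lemma minp (hd0 : (1:ℕ) < d) (hirr : Irrational (Real.sqrt d)) :
    minpoly ℚ (Real.sqrt d) = X ^ 2 - C (d:ℚ) := by
  have hdvd : minpoly ℚ (Real.sqrt d) ∣ X ^ 2 - C (d:ℚ) :=
    minpoly.dvd ℚ _ (by simp [sqq d hd0])
  have hnr : Real.sqrt d ∉ (algebraMap ℚ ℝ).range := by
    rintro ⟨r, hr⟩
    exact hirr ⟨r, by simpa using hr⟩
  have h2 : 2 ≤ (minpoly ℚ (Real.sqrt d)).natDegree :=
    (minpoly.two_le_natDegree_iff (isInt d hd0)).2 hnr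
  refine Polynomial.eq_of_dvd_of_natDegree_le_of_leadingCoeff hdvd ?_ ?_
  · rw [natDegree_X_pow_sub_C]; exact h2
  · rw [(minpoly.monic (isInt d hd0)).leadingCoeff,
      (monic_X_pow_sub_C ((d:ℚ)) (two_ne_zero)).leadingCoeff]

-- the norm formula
private lemma norm_formula (hd0 : (1:ℕ) < d) (hirr : Irrational (Real.sqrt d))
    (θ : ℚ⟮(Real.sqrt d : ℝ)⟯) (a b : ℚ) (hab : (θ : ℝ) = a + b * Real.sqrt d) :
    Algebra.norm ℚ θ = a ^ 2 - d * b ^ 2 := by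
  have hcoe : ∀ x : ℚ⟮(Real.sqrt d : ℝ)⟯, (x : ℝ) = algebraMap ℚ⟮(Real.sqrt d : ℝ)⟯ ℝ x := fun _ => rfl
  have hinj : Function.Injective (algebraMap ℚ⟮(Real.sqrt d : ℝ)⟯ ℝ) := (algebraMap ℚ⟮(Real.sqrt d : ℝ)⟯ ℝ).injective
  set g : ℚ⟮(Real.sqrt d : ℝ)⟯ := AdjoinSimple.gen ℚ (Real.sqrt d) with hg
  have hgen : algebraMap ℚ⟮(Real.sqrt d : ℝ)⟯ ℝ g = (Real.sqrt d) := AdjoinSimple.algebraMap_gen ℚ (Real.sqrt d)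
  set pb := IntermediateField.adjoin.powerBasis (isInt d hd0) with hpb
  have hdim : pb.dim = 2 := by
    rw [hpb, IntermediateField.adjoin.powerBasis_dim, minp d hd0 hirr, natDegree_X_pow_sub_C]
  set B : Module.Basis (Fin 2) ℚ ℚ⟮(Real.sqrt d : ℝ)⟯ := pb.basis.reindex (finCongr hdim) with hB
  have hB0 : B 0 = 1 := by
    rw [hB, Module.Basis.reindex_apply, pb.basis_eq_pow]
    norm_num
  have hB1 : B 1 = g := by
    rw [hB, Module.Basis.reindex_apply, pb.basis_eq_pow]
    simp [hpb, IntermediateField.adjoin.powerBasis_gen, hg]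
  have hsmul : ∀ (c : ℚ) (v : ℚ⟮(Real.sqrt d : ℝ)⟯), algebraMap ℚ⟮(Real.sqrt d : ℝ)⟯ ℝ (c • v) = (c:ℝ) * algebraMap ℚ⟮(Real.sqrt d : ℝ)⟯ ℝ v := by
    intro c v
    rw [Algebra.smul_def, map_mul, ← IsScalarTower.algebraMap_apply]
    norm_num
  have key : ∀ (c₀ c₁ : ℚ) (v : ℚ⟮(Real.sqrt d : ℝ)⟯), algebraMap ℚ⟮(Real.sqrt d : ℝ)⟯ ℝ v = c₀ + c₁ * (Real.sqrt d) →
      v = c₀ • B 0 + c₁ • B 1 := by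
    intro c₀ c₁ v hv
    apply hinj
    rw [map_add, hsmul, hsmul, hB0, hB1, map_one, hgen, hv]
    ring
  have hθd : θ = a • B 0 + b • B 1 := key a b θ (by rw [← hcoe]; exact hab)
  have hθg : θ * B 1 = (d * b : ℚ) • B 0 + a • B 1 := by
    apply key
    rw [map_mul, hB1, hgen, ← hcoe, hab]
    push_cast
    linear_combination ((b:ℝ)) * (sqq d hd0)
  have hrepr : ∀ (c₀ c₁ : ℚ) (i : Fin 2), B.repr (c₀ • B 0 + c₁ • B 1) i
      = if i = 0 then c₀ else c₁ := by
    intro c₀ c₁ i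
    rw [map_add, map_smul, map_smul, B.repr_self, B.repr_self]
    fin_cases i <;> simp
  rw [Algebra.norm_eq_matrix_det B θ, Matrix.det_fin_two]
  have e00 : Algebra.leftMulMatrix B θ 0 0 = a := by
    rw [Algebra.leftMulMatrix_eq_repr_mul, hB0, mul_one, hθd, hrepr]; norm_num
  have e10 : Algebra.leftMulMatrix B θ 1 0 = b := by
    rw [Algebra.leftMulMatrix_eq_repr_mul, hB0, mul_one, hθd, hrepr]; norm_num
  have e01 : Algebra.leftMulMatrix B θ 0 1 = d * b := by
    rw [Algebra.leftMulMatrix_eq_repr_mul, hθg, hrepr]; norm_num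
  have e11 : Algebra.leftMulMatrix B θ 1 1 = a := by
    rw [Algebra.leftMulMatrix_eq_repr_mul, hθg, hrepr]; norm_num
  rw [e00, e01, e10, e11]
  ring
end


variable (d : ℕ)

private lemma rep_exists (hd0 : (1:ℕ) < d) (θ : ℚ⟮(Real.sqrt d : ℝ)⟯) :
    ∃ a b : ℚ, (θ : ℝ) = a + b * Real.sqrt d := by
  have hmem : (θ : ℝ) ∈ Algebra.adjoin ℚ ({Real.sqrt d} : Set ℝ) := by
    rw [← IntermediateField.adjoin_simple_toSubalgebra_of_isAlgebraic (isInt d hd0).isAlgebraic,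
      IntermediateField.mem_toSubalgebra]
    exact θ.2
  generalize (θ : ℝ) = z at hmem ⊢
  induction hmem using Algebra.adjoin_induction with
  | mem x hx =>
    rw [Set.mem_singleton_iff] at hx
    exact ⟨0, 1, by simp [hx]⟩
  | algebraMap r => exact ⟨r, 0, by simp⟩
  | add x y hx hy ihx ihy =>
    obtain ⟨a, b, rfl⟩ := ihx
    obtain ⟨a', b', rfl⟩ := ihy
    exact ⟨a + a', b + b', by push_cast; ring⟩
  | mul x y hx hy ihx ihy =>
    obtain ⟨a, b, rfl⟩ := ihx
    obtain ⟨a', b', rfl⟩ := ihy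
    refine ⟨a * a' + d * (b * b'), a * b' + a' * b, ?_⟩
    have h2 := sqq d hd0
    push_cast
    linear_combination (b:ℝ) * b' * h2

private lemma rep_uniq (hirr : Irrational (Real.sqrt d)) {a b a' b' : ℚ}
    (h : (a:ℝ) + b * Real.sqrt d = a' + b' * Real.sqrt d) : a = a' ∧ b = b' := by
  by_cases hb : b = b'
  · subst hb
    have : (a:ℝ) = a' := by linarith
    exact ⟨by exact_mod_cast this, rfl⟩
  · exfalso
    apply hirr
    refine ⟨(a - a') / (b' - b), ?_⟩
    have hbb : (b':ℝ) - b ≠ 0 := by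
      intro h0
      apply hb
      have : (b:ℝ) = b' := by linarith
      exact_mod_cast this
    push_cast
    field_simp
    linarith
set_option maxHeartbeats 1000000 in
set_option synthInstance.maxHeartbeats 200000 in
/-- Let `q₁, q₂` be distinct primes `≡ 3 (mod 4)` and `m` the squarefree-part invariant
of the fundamental unit of `ℚ(√(q₁q₂))`.  Then `m = q₁` iff `q₁` is a quadratic residue
mod `q₂`, and `m = q₂` iff `q₁` is a non-residue mod `q₂`. -/
theorem m_invariant_of_two_primes_three_mod_four
    (q₁ q₂ : ℕ) (hq₁ : q₁.Prime) (hq₂ : q₂.Prime) (hne : q₁ ≠ q₂)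
    (hq₁4 : q₁ % 4 = 3) (hq₂4 : q₂ % 4 = 3)
    (K : IntermediateField ℚ ℝ) (hK : K = ℚ⟮(Real.sqrt (q₁ * q₂ : ℕ))⟯) [NumberField K]
    (ε : (𝓞 K)ˣ)
    (hfund : ∀ u : (𝓞 K)ˣ, ∃ n : ℤ, u = ε ^ n ∨ u = -ε ^ n)
    (hpos : 1 < (((ε : 𝓞 K) : K) : ℝ))
    (m : ℤ) (hmsf : Squarefree m)
    (hm : ∃ s : ℤ, Algebra.norm ℤ ((ε : 𝓞 K) + 1) = m * s ^ 2) :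
    (m = q₁ ↔ IsSquare ((q₁ : ZMod q₂))) ∧ (m = q₂ ↔ ¬ IsSquare ((q₁ : ZMod q₂))) := by
  obtain ⟨s, hs⟩ := hm
  have hq₁2 := hq₁.two_le
  have hq₂2 := hq₂.two_le
  have h4d : 4 ≤ q₁ * q₂ := by calc 4 = 2 * 2 := rfl
                                   _ ≤ q₁ * q₂ := Nat.mul_le_mul hq₁2 hq₂2
  have hd1 : 1 < q₁ * q₂ := by omega
  have hdsf : Squarefree (q₁ * q₂) :=
    (Nat.squarefree_mul ((Nat.coprime_primes hq₁ hq₂).2 hne)).2 ⟨hq₁.squarefree, hq₂.squarefree⟩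
  have hirr : Irrational (Real.sqrt ((q₁ * q₂ : ℕ) : ℝ)) := by
    refine irrational_sqrt_natCast_iff.2 ?_
    rintro ⟨r, hr⟩
    have := hdsf r (by rw [hr])
    rw [Nat.isUnit_iff] at this
    rw [this, mul_one] at hr
    omega
  subst hK
  -- coordinates of ε
  obtain ⟨a, b, habC⟩ := rep_exists (q₁ * q₂) hd1
    ((ε : 𝓞 ℚ⟮(Real.sqrt ((q₁ * q₂ : ℕ) : ℝ))⟯) : ℚ⟮(Real.sqrt ((q₁ * q₂ : ℕ) : ℝ))⟯)
  obtain ⟨e, hedef⟩ : ∃ t : ℝ, (((ε : 𝓞 ℚ⟮(Real.sqrt ((q₁ * q₂ : ℕ) : ℝ))⟯) :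
      ℚ⟮(Real.sqrt ((q₁ * q₂ : ℕ) : ℝ))⟯) : ℝ) = t := ⟨_, rfl⟩
  have hab : e = (a : ℝ) + (b : ℝ) * Real.sqrt ((q₁ * q₂ : ℕ) : ℝ) := by
    rw [← hedef]; exact habC
  rw [hedef] at hpos
  set n₀ : ℤ := Algebra.norm ℤ ((ε : 𝓞 ℚ⟮(Real.sqrt ((q₁ * q₂ : ℕ) : ℝ))⟯)) with hn₀def
  set N : ℤ := Algebra.norm ℤ ((ε : 𝓞 ℚ⟮(Real.sqrt ((q₁ * q₂ : ℕ) : ℝ))⟯) + 1) with hNdef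
  have hn₀ : ((n₀ : ℚ)) = a ^ 2 - ((q₁ * q₂ : ℕ) : ℚ) * b ^ 2 := by
    rw [hn₀def, Algebra.coe_norm_int]
    exact norm_formula _ hd1 hirr _ a b habC
  have hNc : ((N : ℚ)) = (a + 1) ^ 2 - ((q₁ * q₂ : ℕ) : ℚ) * b ^ 2 := by
    rw [hNdef, Algebra.coe_norm_int]
    refine norm_formula _ hd1 hirr _ (a + 1) b ?_
    have h1 : (((ε : 𝓞 ℚ⟮(Real.sqrt ((q₁ * q₂ : ℕ) : ℝ))⟯) + 1 :
        𝓞 ℚ⟮(Real.sqrt ((q₁ * q₂ : ℕ) : ℝ))⟯) : ℚ⟮(Real.sqrt ((q₁ * q₂ : ℕ) : ℝ))⟯)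
        = ((ε : 𝓞 ℚ⟮(Real.sqrt ((q₁ * q₂ : ℕ) : ℝ))⟯) : ℚ⟮(Real.sqrt ((q₁ * q₂ : ℕ) : ℝ))⟯) + 1 :=
      rfl
    rw [h1]
    push_cast [habC]
    ring
  -- x and y : doubled integer coordinates
  set x : ℤ := N - n₀ - 1 with hxdef
  have hxa : ((x : ℚ)) = 2 * a := by
    rw [hxdef]
    push_cast
    linear_combination hNc - hn₀
  have hn₀s := hn₀
  push_cast at hn₀s
  have hMy : (((q₁ * q₂ : ℕ) : ℤ) : ℚ) * (2 * b) ^ 2 = ((x ^ 2 - 4 * n₀ : ℤ) : ℚ) := by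
    push_cast
    linear_combination 4 * hn₀s - ((x : ℚ) + 2 * a) * hxa
  obtain ⟨y, hyb⟩ := exists_int_of_sq ((q₁ * q₂ : ℕ) : ℤ)
    (Int.squarefree_natCast.2 hdsf) (2 * b) (x ^ 2 - 4 * n₀) hMy
  have hid : x ^ 2 - ((q₁ * q₂ : ℕ) : ℤ) * y ^ 2 = 4 * n₀ := by
    have hQ : ((x ^ 2 - ((q₁ * q₂ : ℕ) : ℤ) * y ^ 2 : ℤ) : ℚ) = ((4 * n₀ : ℤ) : ℚ) := by
      push_cast
      linear_combination ((x : ℚ) + 2 * a) * hxa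
        - (q₁ : ℚ) * (q₂ : ℚ) * (((y : ℚ)) + 2 * b) * hyb - 4 * hn₀s
    exact_mod_cast hQ
  -- ε is a unit, so n₀ = ±1
  have hunit : n₀ = 1 ∨ n₀ = -1 := by
    have h1 : n₀ * (Algebra.norm ℤ
        (((ε⁻¹ : _ˣ) : 𝓞 ℚ⟮(Real.sqrt ((q₁ * q₂ : ℕ) : ℝ))⟯))) = 1 := by
      rw [hn₀def, ← map_mul]
      rw [Units.mul_inv]
      exact map_one _
    have := Int.isUnit_iff.1 (IsUnit.of_mul_eq_one _ h1)
    tauto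
  haveI : Fact q₁.Prime := ⟨hq₁⟩
  haveI : Fact q₂.Prime := ⟨hq₂⟩
  have hn₀1 : n₀ = 1 := by
    rcases hunit with h | h
    · exact h
    exfalso
    have hz : ((x : ZMod q₁)) ^ 2 = -4 := by
      have hc := congrArg (fun t : ℤ => (t : ZMod q₁)) hid
      push_cast at hc
      rw [ZMod.natCast_self, h] at hc
      push_cast at hc
      linear_combination hc
    have h2 : (2 : ZMod q₁) ≠ 0 := by
      have h2' : ((2 : ℕ) : ZMod q₁) ≠ 0 := by
        rw [Ne, ZMod.natCast_eq_zero_iff]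
        intro hdvd
        have := Nat.le_of_dvd (by norm_num) hdvd
        omega
      simpa using h2'
    have hsq : IsSquare (-1 : ZMod q₁) := by
      refine ⟨(x : ZMod q₁) * 2⁻¹, ?_⟩
      field_simp
      linear_combination -hz
    rw [ZMod.exists_sq_eq_neg_one_iff] at hsq
    exact hsq hq₁4
  rw [hn₀1, mul_one] at hid
  -- quadratic equation for e over ℝ
  have hq1R : (a : ℝ) ^ 2 - ((q₁ * q₂ : ℕ) : ℝ) * (b : ℝ) ^ 2 = 1 := by
    have h' : a ^ 2 - ((q₁ * q₂ : ℕ) : ℚ) * b ^ 2 = 1 := by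
      rw [← hn₀, hn₀1]; norm_num
    exact_mod_cast congrArg (fun t : ℚ => (t : ℝ)) h'
  have hxaR : ((x : ℝ)) = 2 * (a : ℝ) := by exact_mod_cast hxa
  have he2 : e ^ 2 = (x : ℝ) * e - 1 := by
    rw [hab, hxaR]
    linear_combination (b : ℝ) ^ 2 * (sqq (q₁ * q₂) hd1) - hq1R
  have hx3 : 3 ≤ x := by
    have h1 : (0 : ℝ) < e - 1 := by linarith
    have h3 : e * ((x : ℝ) - 2) = (e - 1) ^ 2 := by linear_combination -he2
    have h5 : (0 : ℝ) < (e - 1) ^ 2 := pow_pos h1 2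
    have h4 : (0 : ℝ) < (x : ℝ) - 2 := by nlinarith [h3, h5, hpos]
    have : (2 : ℤ) < x := by exact_mod_cast (by linarith : (2:ℝ) < (x:ℝ))
    omega
  have hy0 : y ≠ 0 := by
    rintro rfl
    simp at hid
    nlinarith [hid, hx3]
  have hms : m * s ^ 2 = x + 2 := by
    have hn' : (a : ℚ) ^ 2 - ((q₁ * q₂ : ℕ) : ℚ) * b ^ 2 = 1 := by
      rw [← hn₀, hn₀1]; norm_num
    have hQ : ((N : ℚ)) = (x : ℚ) + 2 := by
      rw [hNc]
      linear_combination hn' - hxa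
    have hNx : N = x + 2 := by exact_mod_cast hQ
    rw [← hNx, ← hs]
  have hs0 : s ≠ 0 := by
    rintro rfl
    simp at hms
    omega
  have hm0 : 0 < m := by
    have hss : (0 : ℤ) < s ^ 2 := by positivity
    nlinarith [hms]
  have hprodZ : (x + 2) * (x - 2) = (q₁ : ℤ) * (q₂ : ℤ) * y ^ 2 := by
    push_cast at hid ⊢
    linear_combination hid
  -- ε has no square root in the field (contradiction machine)
  have hquad : ((ε : 𝓞 ℚ⟮(Real.sqrt ((q₁ * q₂ : ℕ) : ℝ))⟯) :
      ℚ⟮(Real.sqrt ((q₁ * q₂ : ℕ) : ℝ))⟯) ^ 2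
      - (x : ℚ⟮(Real.sqrt ((q₁ * q₂ : ℕ) : ℝ))⟯)
        * ((ε : 𝓞 ℚ⟮(Real.sqrt ((q₁ * q₂ : ℕ) : ℝ))⟯) : ℚ⟮(Real.sqrt ((q₁ * q₂ : ℕ) : ℝ))⟯)
      + 1 = 0 := by
    apply (algebraMap ℚ⟮(Real.sqrt ((q₁ * q₂ : ℕ) : ℝ))⟯ ℝ).injective
    rw [map_add, map_sub, map_pow, map_mul, map_one, map_zero, map_intCast]
    have hcoe : algebraMap ℚ⟮(Real.sqrt ((q₁ * q₂ : ℕ) : ℝ))⟯ ℝ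
        ((ε : 𝓞 ℚ⟮(Real.sqrt ((q₁ * q₂ : ℕ) : ℝ))⟯) : ℚ⟮(Real.sqrt ((q₁ * q₂ : ℕ) : ℝ))⟯) = e :=
      hedef
    rw [hcoe]
    linear_combination he2
  have hsqrt : ∀ η : ℚ⟮(Real.sqrt ((q₁ * q₂ : ℕ) : ℝ))⟯,
      η ^ 2 = ((ε : 𝓞 ℚ⟮(Real.sqrt ((q₁ * q₂ : ℕ) : ℝ))⟯) :
        ℚ⟮(Real.sqrt ((q₁ * q₂ : ℕ) : ℝ))⟯) → False := by
    intro η hη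
    have hint : IsIntegral ℤ η := by
      refine ⟨X ^ 4 + (C (-x) * X ^ 2 + C 1), ?_, ?_⟩
      · apply Polynomial.monic_X_pow_add
        apply lt_of_le_of_lt (Polynomial.degree_add_le _ _)
        apply max_lt
        · exact lt_of_le_of_lt (Polynomial.degree_C_mul_X_pow_le _ _) (by norm_num)
        · apply lt_of_le_of_lt (Polynomial.degree_C_le)
          norm_num
      · have h4 : (Polynomial.aeval η) ((X ^ 4 + (C (-x) * X ^ 2 + C 1) : ℤ[X])) = 0 := by
          simp only [map_add, map_mul, map_pow, Polynomial.aeval_X, Polynomial.aeval_C,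
            algebraMap_int_eq, eq_intCast, map_intCast, map_neg, map_one]
          push_cast
          rw [show η ^ 4 = (η ^ 2) ^ 2 by ring, hη]
          linear_combination hquad
        simpa [Polynomial.aeval_def] using h4
    set η₀ : 𝓞 ℚ⟮(Real.sqrt ((q₁ * q₂ : ℕ) : ℝ))⟯ := ⟨η, hint⟩ with hη₀def
    have hη₀sq : η₀ * η₀ = (ε : 𝓞 ℚ⟮(Real.sqrt ((q₁ * q₂ : ℕ) : ℝ))⟯) := by
      apply NumberField.RingOfIntegers.ext
      show η * η = _
      rw [← sq, hη]
    have hUnit : IsUnit η₀ := by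
      apply IsUnit.of_mul_eq_one
        (η₀ * ((ε⁻¹ : _ˣ) : 𝓞 ℚ⟮(Real.sqrt ((q₁ * q₂ : ℕ) : ℝ))⟯))
      rw [← mul_assoc, hη₀sq, Units.mul_inv]
    obtain ⟨u, hu⟩ := hUnit
    have hu2 : u ^ 2 = ε := by
      apply Units.ext
      rw [Units.val_pow_eq_pow_val, hu, sq, hη₀sq]
    obtain ⟨n, hn⟩ := hfund u
    have hsq2u : (ε ^ n) ^ 2 = ε := by
      rcases hn with hn | hn
      · rw [← hn]; exact hu2
      · rw [← neg_sq, ← hn]; exact hu2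
    have hcase : (ε : (𝓞 ℚ⟮(Real.sqrt ((q₁ * q₂ : ℕ) : ℝ))⟯)ˣ) = ε ^ (n + n) :=
      (hsq2u.symm).trans (by rw [sq, ← zpow_add])
    have hone : (ε : (𝓞 ℚ⟮(Real.sqrt ((q₁ * q₂ : ℕ) : ℝ))⟯)ˣ) ^ (n + n - 1) = 1 := by
      rw [zpow_sub, zpow_one, ← hcase]
      simp
    have hreal : e ^ (n + n - 1) = 1 := by
      have hmap := congrArg (Units.map (((algebraMap ℚ⟮(Real.sqrt ((q₁ * q₂ : ℕ) : ℝ))⟯ ℝ).comp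
        (algebraMap (𝓞 ℚ⟮(Real.sqrt ((q₁ * q₂ : ℕ) : ℝ))⟯)
          ℚ⟮(Real.sqrt ((q₁ * q₂ : ℕ) : ℝ))⟯)).toMonoidHom)) hone
      rw [map_zpow, map_one] at hmap
      have hval := congrArg Units.val hmap
      rw [Units.val_zpow_eq_zpow_val, Units.val_one] at hval
      rw [← hval]
      congr 1
      exact hedef.symm
    have h0 : n + n - 1 = 0 := int_zero_of_zpow_eq_one hpos hreal
    omega
  -- m ≠ 1
  have hm1 : m ≠ 1 := by
    rintro rfl
    rw [one_mul] at hms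
    apply hsqrt ((algebraMap ℚ ℚ⟮(Real.sqrt ((q₁ * q₂ : ℕ) : ℝ))⟯ ((s : ℚ)))⁻¹
      * (((ε : 𝓞 ℚ⟮(Real.sqrt ((q₁ * q₂ : ℕ) : ℝ))⟯) : ℚ⟮(Real.sqrt ((q₁ * q₂ : ℕ) : ℝ))⟯) + 1))
    apply (algebraMap ℚ⟮(Real.sqrt ((q₁ * q₂ : ℕ) : ℝ))⟯ ℝ).injective
    have hsR : ((s : ℝ)) ≠ 0 := by exact_mod_cast hs0
    have hmsR : ((s : ℝ)) ^ 2 = (x : ℝ) + 2 := by exact_mod_cast hms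
    rw [map_pow, map_mul, map_inv₀, map_add, map_one]
    rw [show (algebraMap ℚ⟮(Real.sqrt ((q₁ * q₂ : ℕ) : ℝ))⟯ ℝ)
      ((algebraMap ℚ ℚ⟮(Real.sqrt ((q₁ * q₂ : ℕ) : ℝ))⟯) ((s : ℚ))) = (s : ℝ) from by
        rw [← IsScalarTower.algebraMap_apply]; push_cast; norm_num]
    rw [show (algebraMap ℚ⟮(Real.sqrt ((q₁ * q₂ : ℕ) : ℝ))⟯ ℝ)
      ((ε : 𝓞 ℚ⟮(Real.sqrt ((q₁ * q₂ : ℕ) : ℝ))⟯) : ℚ⟮(Real.sqrt ((q₁ * q₂ : ℕ) : ℝ))⟯) = e from hedef]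
    field_simp
    linear_combination he2 - e * hmsR
  -- m ≠ q₁ * q₂
  have hmd : m ≠ ((q₁ * q₂ : ℕ) : ℤ) := by
    intro hmeq
    rw [hmeq] at hms
    apply hsqrt ((((ε : 𝓞 ℚ⟮(Real.sqrt ((q₁ * q₂ : ℕ) : ℝ))⟯) :
        ℚ⟮(Real.sqrt ((q₁ * q₂ : ℕ) : ℝ))⟯) + 1)
      * ((algebraMap ℚ ℚ⟮(Real.sqrt ((q₁ * q₂ : ℕ) : ℝ))⟯ ((s : ℚ)))
        * AdjoinSimple.gen ℚ (Real.sqrt ((q₁ * q₂ : ℕ) : ℝ)))⁻¹)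
    apply (algebraMap ℚ⟮(Real.sqrt ((q₁ * q₂ : ℕ) : ℝ))⟯ ℝ).injective
    have hsR : ((s : ℝ)) ≠ 0 := by exact_mod_cast hs0
    have hmsR : ((q₁ * q₂ : ℕ) : ℝ) * (s : ℝ) ^ 2 = (x : ℝ) + 2 := by exact_mod_cast hms
    have hα0 : (0:ℝ) < Real.sqrt ((q₁ * q₂ : ℕ) : ℝ) := Real.sqrt_pos.2 (by positivity)
    rw [map_pow, map_mul, map_inv₀, map_mul, map_add, map_one]
    rw [show (algebraMap ℚ⟮(Real.sqrt ((q₁ * q₂ : ℕ) : ℝ))⟯ ℝ)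
      ((algebraMap ℚ ℚ⟮(Real.sqrt ((q₁ * q₂ : ℕ) : ℝ))⟯) ((s : ℚ))) = (s : ℝ) from by
        rw [← IsScalarTower.algebraMap_apply]; push_cast; norm_num]
    rw [AdjoinSimple.algebraMap_gen]
    rw [show (algebraMap ℚ⟮(Real.sqrt ((q₁ * q₂ : ℕ) : ℝ))⟯ ℝ)
      ((ε : 𝓞 ℚ⟮(Real.sqrt ((q₁ * q₂ : ℕ) : ℝ))⟯) : ℚ⟮(Real.sqrt ((q₁ * q₂ : ℕ) : ℝ))⟯) = e from hedef]
    have hsq2 := sqq (q₁ * q₂) hd1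
    have hden : ((s : ℝ) * Real.sqrt ((q₁ * q₂ : ℕ) : ℝ)) ^ 2
        = (s : ℝ) ^ 2 * ((q₁ * q₂ : ℕ) : ℝ) := by rw [mul_pow, hsq2]
    have hden0 : (s : ℝ) ^ 2 * ((q₁ * q₂ : ℕ) : ℝ) ≠ 0 := by positivity
    rw [mul_pow, inv_pow, hden, ← div_eq_mul_inv, div_eq_iff hden0]
    linear_combination he2 - e * hmsR
  -- m ∈ {1, q₁, q₂, q₁q₂} : reduce to ℕ
  have hprodN : (x + 2).natAbs * ((x + 2).natAbs - 4) = q₁ * q₂ * y.natAbs ^ 2 := by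
    have h1 : ((x + 2) * (x - 2)).natAbs = (x + 2).natAbs * (x - 2).natAbs := Int.natAbs_mul _ _
    have h2 : (x - 2).natAbs = (x + 2).natAbs - 4 := by omega
    have h3 := congrArg Int.natAbs hprodZ
    rw [h1, h2] at h3
    rw [h3]
    simp [Int.natAbs_mul, Int.natAbs_pow]
  have hmsN : m.natAbs * s.natAbs ^ 2 = (x + 2).natAbs := by
    have := congrArg Int.natAbs hms
    simpa [Int.natAbs_mul, Int.natAbs_pow] using this
  have hX5 : 5 ≤ (x + 2).natAbs := by omega
  have hmdvd : m.natAbs ∣ q₁ * q₂ := by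
    apply sf_dvd_of_primes (Int.squarefree_natAbs.2 hmsf) (by omega)
    intro p hp hpm
    exact prime_dvd_aux q₁ q₂ hq₁ hq₂ hq₁4 hq₂4 m.natAbs (x + 2).natAbs y.natAbs s.natAbs
      (Int.squarefree_natAbs.2 hmsf) hX5 (Int.natAbs_ne_zero.2 hy0) hprodN hmsN p hp hpm
  have hmcases := eq_cases_of_dvd_mul hq₁ hq₂ hne hmdvd
  have hmval : m = (q₁ : ℤ) ∨ m = (q₂ : ℤ) := by
    have hmnat : m = (m.natAbs : ℤ) := by omega
    rcases hmcases with h | h | h | h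
    · exfalso; apply hm1; omega
    · left; omega
    · right; omega
    · exfalso; apply hmd; push_cast; omega
  -- residue conclusions
  have F1 : m = (q₁ : ℤ) → IsSquare ((q₁ : ZMod q₂)) := by
    intro h
    exact isSquare_of_rep q₁ q₂ hq₁ hq₂ hq₂4 x y s hx3 hy0 hs0 hprodZ (by rw [← h]; exact hms)
  have F2 : m = (q₂ : ℤ) → ¬ IsSquare ((q₁ : ZMod q₂)) := by
    intro h
    have hP2 : IsSquare ((q₂ : ZMod q₁)) :=
      isSquare_of_rep q₂ q₁ hq₂ hq₁ hq₁4 x y s hx3 hy0 hs0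
        (by rw [hprodZ]; ring) (by rw [← h]; exact hms)
    exact (ZMod.exists_sq_eq_prime_iff_of_mod_four_eq_three hq₁4 hq₂4 hne).1 hP2
  have hq12 : (q₁ : ℤ) ≠ (q₂ : ℤ) := by exact_mod_cast hne
  refine ⟨⟨F1, fun hP => ?_⟩, ⟨F2, fun hnP => ?_⟩⟩
  · rcases hmval with h | h
    · exact h
    · exact absurd hP (F2 h)
  · rcases hmval with h | h
    · exact absurd (F1 h) hnP
    · exact h
end

section
/- Let q₁ and q₂ be distinct primes congruent to 3 mod 4 with q₁ a quadratic residue mod q₂. Then q₂ is not the norm of an algebraic integer of ℚ(√(q₁q₂)). -/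
set_option maxHeartbeats 1000000
set_option synthInstance.maxHeartbeats 200000

open NumberField IntermediateField Polynomial

private theorem no_sol_aux (q₁ q₂ : ℕ) (hq₁ : q₁.Prime) (hq₂ : q₂.Prime) (hne : q₁ ≠ q₂)
    (hq₁4 : q₁ % 4 = 3) (hq₂4 : q₂ % 4 = 3)
    (hres : IsSquare ((q₁ : ZMod q₂)))
    (a b : ℤ) (h : a^2 - (q₁*q₂:ℕ) * b^2 = 4*q₂) : False := by
  haveI : Fact q₁.Prime := ⟨hq₁⟩
  haveI : Fact q₂.Prime := ⟨hq₂⟩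
  have hq₁2 : q₁ ≠ 2 := by rintro rfl; simp at hq₁4
  have hq₂2 : q₂ ≠ 2 := by rintro rfl; simp at hq₂4
  have hsq : IsSquare ((q₂ : ZMod q₁)) := by
    have h1 : ((a : ZMod q₁))^2 = 4*q₂ := by
      have := congrArg (fun z : ℤ => (z : ZMod q₁)) h
      push_cast at this
      simp [ZMod.natCast_self] at this
      linear_combination this
    have h2 : ((2 : ZMod q₁))⁻¹ ^ 2 * ((a:ZMod q₁))^2 = q₂ := by
      rw [h1]
      have h4 : (4 : ZMod q₁) = 2^2 := by norm_num
      have h2ne : (2 : ZMod q₁) ≠ 0 := by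
        have : ((2:ℕ) : ZMod q₁) ≠ 0 := by
          rw [Ne, ZMod.natCast_eq_zero_iff]
          exact fun hd => hq₁2 ((Nat.prime_dvd_prime_iff_eq hq₁ Nat.prime_two).mp hd)
        simpa using this
      field_simp [h4]
      ring
    exact ⟨(2 : ZMod q₁)⁻¹ * a, by rw [← h2]; ring⟩
  have l1 : legendreSym q₁ q₂ = 1 := (legendreSym.eq_one_iff' q₁ (by
    rw [Ne, ZMod.natCast_eq_zero_iff]
    exact fun hd => hne ((Nat.prime_dvd_prime_iff_eq hq₁ hq₂).mp hd))).mpr hsq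
  have l2 : legendreSym q₂ q₁ = 1 := (legendreSym.eq_one_iff' q₂ (by
    rw [Ne, ZMod.natCast_eq_zero_iff]
    exact fun hd => hne ((Nat.prime_dvd_prime_iff_eq hq₂ hq₁).mp hd).symm)).mpr hres
  have := legendreSym.quadratic_reciprocity_three_mod_four hq₁4 hq₂4
  rw [l1, l2] at this
  norm_num at this

/-- Let `q₁, q₂` be distinct primes `≡ 3 (mod 4)` with `q₁` a quadratic residue mod `q₂`.
Then `q₂` is not the norm of an algebraic integer of `ℚ(√(q₁q₂))`. -/
theorem q₂_not_norm_of_integer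
    (q₁ q₂ : ℕ) (hq₁ : q₁.Prime) (hq₂ : q₂.Prime) (hne : q₁ ≠ q₂)
    (hq₁4 : q₁ % 4 = 3) (hq₂4 : q₂ % 4 = 3)
    (hres : IsSquare ((q₁ : ZMod q₂)))
    (K : IntermediateField ℚ ℝ) (hK : K = ℚ⟮(Real.sqrt (q₁ * q₂ : ℕ))⟯) [NumberField K] :
    ¬ ∃ α : 𝓞 K, Algebra.norm ℤ α = q₂ := by
  subst hK
  set θ : ℝ := Real.sqrt ((q₁ * q₂ : ℕ) : ℝ) with hθdef
  rintro ⟨α, hα⟩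
  have hθsq : θ^2 = ((q₁*q₂ : ℕ) : ℝ) := Real.sq_sqrt (by positivity)
  have hdsqf : Squarefree (q₁*q₂) :=
    (Nat.squarefree_mul ((Nat.coprime_primes hq₁ hq₂).mpr hne)).mpr
      ⟨hq₁.squarefree, hq₂.squarefree⟩
  have hnotsq : ¬ IsSquare (q₁*q₂) := by
    rintro ⟨m, hm⟩
    have hu : IsUnit m := hdsqf m (hm ▸ dvd_refl _)
    rw [Nat.isUnit_iff] at hu
    rw [hu] at hm
    exact Nat.Prime.one_lt hq₁ |>.ne' (by nlinarith [hq₂.one_lt])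
  have hirr : Irrational θ := irrational_sqrt_natCast_iff.mpr hnotsq
  have hθint : IsIntegral ℚ θ := by
    refine ⟨X^2 - C ((q₁*q₂:ℕ):ℚ), monic_X_pow_sub_C _ (by norm_num), ?_⟩
    simp [eval₂_sub, hθsq]
  -- every element of the field is p + q θ
  have hrep : ∀ y : ℚ⟮θ⟯, ∃ p q : ℚ, (y : ℝ) = p + q * θ := by
    intro y
    have hy : (y:ℝ) ∈ Algebra.adjoin ℚ {θ} := by
      rw [← IntermediateField.adjoin_simple_toSubalgebra_of_isAlgebraic hθint.isAlgebraic]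
      exact y.2
    refine Algebra.adjoin_induction (p := fun z _ => ∃ p q : ℚ, z = p + q * θ)
      ?_ ?_ ?_ ?_ hy
    · rintro z rfl; exact ⟨0, 1, by simp⟩
    · intro r; exact ⟨r, 0, by simp⟩
    · rintro z w _ _ ⟨p, q, rfl⟩ ⟨p', q', rfl⟩
      exact ⟨p+p', q+q', by push_cast; ring⟩
    · rintro z w _ _ ⟨p, q, rfl⟩ ⟨p', q', rfl⟩
      refine ⟨p*p' + q*q'*(q₁*q₂:ℕ), p*q'+q*p', ?_⟩
      have h2 := hθsq
      push_cast at h2 ⊢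
      linear_combination (q:ℝ)*(q':ℝ)*h2
  set ξ : ℚ⟮θ⟯ := ⟨θ, mem_adjoin_simple_self ℚ θ⟩ with hξdef
  have hξsq : ξ^2 = algebraMap ℚ ℚ⟮θ⟯ ((q₁*q₂:ℕ):ℚ) := by
    apply Subtype.coe_injective
    have h2 := hθsq
    push_cast at h2 ⊢
    exact h2
  -- the basis
  have hli : LinearIndependent ℚ ![(1 : ℚ⟮θ⟯), ξ] := by
    rw [LinearIndependent.pair_iff]
    intro s t hst
    have hst' : (s:ℝ) + t * θ = 0 := by
      have := congrArg (fun z : ℚ⟮θ⟯ => (z:ℝ)) hst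
      simpa [Algebra.smul_def] using this
    rcases eq_or_ne t 0 with rfl | ht
    · constructor
      · exact_mod_cast by simpa using hst'
      · rfl
    · exact absurd ⟨-s/t, by push_cast; field_simp; linarith [hst']⟩ hirr
  have hsp : ⊤ ≤ Submodule.span ℚ (Set.range ![(1 : ℚ⟮θ⟯), ξ]) := by
    rintro y -
    obtain ⟨p, q, hpq⟩ := hrep y
    have hy : p • (1:ℚ⟮θ⟯) + q • ξ = y := by
      apply Subtype.coe_injective
      simpa [Algebra.smul_def] using hpq.symm
    have hr : Set.range ![(1 : ℚ⟮θ⟯), ξ] = {1, ξ} := by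
      rw [show ({1, ξ} : Set ℚ⟮θ⟯) = {ξ, 1} from Set.pair_comm 1 ξ]
      simp [Matrix.range_cons, Matrix.range_empty]
    rw [hr]
    exact Submodule.mem_span_pair.mpr ⟨p, q, hy⟩
  let b : Module.Basis (Fin 2) ℚ ℚ⟮θ⟯ := Module.Basis.mk hli hsp
  have hb0 : b 0 = 1 := by simp [b, Module.Basis.coe_mk]
  have hb1 : b 1 = ξ := by simp [b, Module.Basis.coe_mk]
  -- the element
  set x : ℚ⟮θ⟯ := (α : ℚ⟮θ⟯) with hxdef
  obtain ⟨p, q, hpq⟩ := hrep x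
  have hx : x = p • (1:ℚ⟮θ⟯) + q • ξ := by
    apply Subtype.coe_injective
    simpa [Algebra.smul_def] using hpq
  -- multiplication equations
  have e0 : x * b 0 = p • b 0 + q • b 1 := by rw [hb0, hb1, mul_one, hx]
  have e1 : x * b 1 = (((q₁*q₂:ℕ):ℚ) * q) • b 0 + p • b 1 := by
    rw [hb0, hb1, hx]
    have : ξ * ξ = ((q₁*q₂:ℕ):ℚ) • (1:ℚ⟮θ⟯) := by
      rw [← pow_two, hξsq, Algebra.algebraMap_eq_smul_one]
    rw [add_mul, smul_mul_assoc, smul_mul_assoc, one_mul, this]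
    module
  -- matrix entries
  have hM : ∀ i j, Algebra.leftMulMatrix b x i j =
      (b.repr (x * b j)) i := fun i j => Algebra.leftMulMatrix_eq_repr_mul b x i j
  have r0 : b.repr (x * b 0) = p • Finsupp.single 0 1 + q • Finsupp.single 1 1 := by
    rw [e0, map_add, map_smul, map_smul, Module.Basis.repr_self, Module.Basis.repr_self]
  have r1 : b.repr (x * b 1) = (((q₁*q₂:ℕ):ℚ) * q) • Finsupp.single 0 1 + p • Finsupp.single 1 1 := by
    rw [e1, map_add, map_smul, map_smul, Module.Basis.repr_self, Module.Basis.repr_self]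
  have hnorm : Algebra.norm ℚ x = p^2 - ((q₁*q₂:ℕ):ℚ) * q^2 := by
    rw [Algebra.norm_eq_matrix_det b x, Matrix.det_fin_two, hM, hM, hM, hM, r0, r1]
    simp [Finsupp.single_apply]
    ring
  have htrace : Algebra.trace ℚ ℚ⟮θ⟯ x = 2 * p := by
    rw [Algebra.trace_eq_matrix_trace b x, Matrix.trace_fin_two, hM, hM, r0, r1]
    simp [Finsupp.single_apply]
    ring
  -- norm value
  have hNx : Algebra.norm ℚ x = ((q₂:ℕ):ℚ) := by
    rw [hxdef, ← Algebra.coe_norm_int α, hα]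
    push_cast
    ring
  have eq1 : p^2 - ((q₁*q₂:ℕ):ℚ) * q^2 = (q₂:ℚ) := by rw [← hnorm, hNx]
  -- trace is an integer
  have hxint : IsIntegral ℤ x := NumberField.RingOfIntegers.isIntegral_coe α
  have hTint : IsIntegral ℤ (Algebra.trace ℚ ℚ⟮θ⟯ x) := Algebra.isIntegral_trace hxint
  obtain ⟨z, hz⟩ := IsIntegrallyClosed.isIntegral_iff.mp hTint
  have hz' : (z:ℚ) = 2 * p := by rw [← htrace]; exact_mod_cast hz
  -- denominator of 2q
  set u : ℚ := 2*q with hudef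
  have equ : ((q₁*q₂:ℕ):ℚ) * u^2 = (z:ℚ)^2 - 4*(q₂:ℚ) := by
    linear_combination (-(z:ℚ) - 2*p) * hz' - 4 * eq1
  have hden : (u.den : ℤ) = 1 := by
    have hd0 : (u.den:ℚ) ≠ 0 := by exact_mod_cast u.den_ne_zero
    have hnum : (u.num:ℚ) = u * u.den := by
      have h := u.num_div_den
      rwa [div_eq_iff hd0] at h
    have key : ((q₁*q₂:ℕ):ℤ) * u.num^2 = (z^2 - 4*(q₂:ℤ)) * (u.den:ℤ)^2 := by
      have : ((q₁*q₂:ℕ):ℚ) * (u.num:ℚ)^2 = ((z:ℚ)^2 - 4*(q₂:ℚ)) * (u.den:ℚ)^2 := by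
        rw [hnum]; linear_combination (u.den:ℚ)^2 * equ
      exact_mod_cast this
    have hdvd : (u.den:ℤ)^2 ∣ ((q₁*q₂:ℕ):ℤ) * u.num^2 := by rw [key]; exact dvd_mul_left _ _
    have hcop : IsCoprime ((u.den:ℤ)) u.num := by
      rw [Int.isCoprime_iff_gcd_eq_one, Int.gcd]
      simpa [Nat.coprime_comm] using u.reduced
    have hdvd2 : (u.den:ℤ)^2 ∣ ((q₁*q₂:ℕ):ℤ) := (hcop.pow).dvd_of_dvd_mul_right hdvd
    have hsf : Squarefree ((q₁*q₂:ℕ):ℤ) := Int.squarefree_natCast.mpr hdsqf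
    have : IsUnit ((u.den:ℤ)) := hsf _ (by rwa [← pow_two])
    rcases Int.isUnit_iff.mp this with h | h
    · exact h
    · exfalso; omega
  have hu' : (u.num : ℚ) = u := by
    have hd0 : (u.den:ℚ) ≠ 0 := by exact_mod_cast u.den_ne_zero
    have h := u.num_div_den
    rw [div_eq_iff hd0] at h
    have h1 : (u.den : ℚ) = 1 := by exact_mod_cast hden
    rw [h, h1, mul_one]
  -- final contradiction
  refine no_sol_aux q₁ q₂ hq₁ hq₂ hne hq₁4 hq₂4 hres z u.num ?_
  have : (z:ℚ)^2 - ((q₁*q₂:ℕ):ℚ) * (u.num:ℚ)^2 = 4*(q₂:ℚ) := by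
    rw [hu']; linear_combination -equ
  exact_mod_cast this
end

section
/- If n > 1 is an integer with n ≢ 2 (mod 5) and both n²+1 and (n+1)²+1 are squarefree, then N²+1 is squarefree, where N = n(n+1)+1. -/
/-- If `n > 1`, `n ≢ 2 (mod 5)` and both `n²+1` and `(n+1)²+1` are squarefree, then
`N²+1` is squarefree, where `N = n(n+1)+1`. -/
theorem squarefree_N_sq_add_one (n : ℤ) (hn : 1 < n) (hn5 : n % 5 ≠ 2)
    (h1 : Squarefree (n ^ 2 + 1)) (h2 : Squarefree ((n + 1) ^ 2 + 1)) :
    Squarefree ((n * (n + 1) + 1) ^ 2 + 1) := by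
  have key : (n * (n + 1) + 1) ^ 2 + 1 = (n ^ 2 + 1) * ((n + 1) ^ 2 + 1) := by ring
  rw [key]
  have hcop : IsCoprime (n ^ 2 + 1) ((n + 1) ^ 2 + 1) := by
    rw [Int.isCoprime_iff_gcd_eq_one]
    set d : ℕ := Int.gcd (n ^ 2 + 1) ((n + 1) ^ 2 + 1) with hd
    have hda : (d : ℤ) ∣ n ^ 2 + 1 := Int.gcd_dvd_left _ _
    have hdb : (d : ℤ) ∣ (n + 1) ^ 2 + 1 := Int.gcd_dvd_right _ _
    have h5 : (d : ℤ) ∣ 5 := by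
      have : (5 : ℤ) = (2 * n + 3) * (n ^ 2 + 1) - (2 * n - 1) * ((n + 1) ^ 2 + 1) := by ring
      rw [this]
      exact dvd_sub (hda.mul_left _) (hdb.mul_left _)
    have hd5 : d ∣ 5 := by exact_mod_cast Int.ofNat_dvd.mp (by exact_mod_cast h5)
    rcases (Nat.dvd_prime (by norm_num)).mp hd5 with h | h
    · exact h
    · exfalso
      rw [h] at hda hdb
      have h2n : (5 : ℤ) ∣ 2 * n + 1 := by
        have : (2 : ℤ) * n + 1 = ((n + 1) ^ 2 + 1) - (n ^ 2 + 1) := by ring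
        rw [this]
        exact dvd_sub (by exact_mod_cast hdb) (by exact_mod_cast hda)
      have hsq : (5 : ℤ) ∣ n ^ 2 + 1 := by exact_mod_cast hda
      obtain ⟨k, hk⟩ := h2n
      omega
  exact squarefree_mul_iff.mpr ⟨hcop.isRelPrime, h1, h2⟩
end

section
/- Let k be a real quadratic field with fundamental unit ε of norm +1 and let α be the totally positive integer with ε = σ(α)/α and m = Norm(α) squarefree dividing the discriminant. Then the product of the classes of the ramified primes dividing m is trivial in the strict class group of k. -/
open NumberField IntermediateField

open Polynomial in
/-- In a unique factorization monoid, equal powers (with nonzero exponent) are associated. -/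
theorem my_assoc_of_pow_eq_pow {M : Type*} [CommMonoidWithZero M]
    [UniqueFactorizationMonoid M] {n : ℕ} (hn : n ≠ 0) (a : M) :
    ∀ b : M, a ^ n = b ^ n → Associated a b := by
  refine UniqueFactorizationMonoid.induction_on_prime a ?_ ?_ ?_
  · intro b h
    rw [zero_pow hn] at h
    obtain rfl : b = 0 := by
      have := h.symm
      rwa [pow_eq_zero_iff hn] at this
    exact Associated.refl 0
  · intro x hx b h
    have hb : IsUnit b := by
      have : IsUnit (b ^ n) := h ▸ hx.pow n
      exact (isUnit_pow_iff hn).mp this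
    exact (associated_one_iff_isUnit.mpr hx).trans (associated_one_iff_isUnit.mpr hb).symm
  · intro a p ha hp IH b h
    have hpb : p ∣ b := by
      refine hp.dvd_of_dvd_pow (n := n) ?_
      rw [← h]
      exact dvd_pow (dvd_mul_right p a) hn
    obtain ⟨b', rfl⟩ := hpb
    have key : a ^ n = b' ^ n := by
      have hpn : (p : M) ^ n ≠ 0 := pow_ne_zero _ hp.ne_zero
      apply mul_left_cancel₀ hpn
      rw [← mul_pow, ← mul_pow, h]
    exact (IH b' key).mul_left p

open Polynomial in
set_option synthInstance.maxHeartbeats 1000000 in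
set_option maxHeartbeats 2000000 in
theorem my_quadratic_galois (d : ℤ) (x : ℝ) (hx2 : x ^ 2 = (d : ℝ)) (hirr : Irrational x)
    [NumberField (ℚ⟮x⟯ : IntermediateField ℚ ℝ)]
    (σ : (ℚ⟮x⟯ : IntermediateField ℚ ℝ) ≃ₐ[ℚ] (ℚ⟮x⟯ : IntermediateField ℚ ℝ))
    (hσ : σ ≠ AlgEquiv.refl) :
    IsGalois ℚ (ℚ⟮x⟯ : IntermediateField ℚ ℝ) ∧
      Module.finrank ℚ (ℚ⟮x⟯ : IntermediateField ℚ ℝ) = 2 := by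
  classical
  have hnsq : ¬ IsSquare ((d:ℤ) : ℚ) := by
    rintro ⟨b, hb⟩
    have hb2 : ((b:ℝ)) ^ 2 = x ^ 2 := by
      rw [hx2]
      have : ((b:ℝ)) ^ 2 = ((b * b : ℚ) : ℝ) := by push_cast; ring
      rw [this, ← hb]
      norm_cast
    rcases sq_eq_sq_iff_eq_or_eq_neg.mp hb2.symm with h | h
    · exact hirr ⟨b, h.symm⟩
    · exact hirr ⟨-b, by push_cast; exact h.symm⟩
  set p : ℚ[X] := X ^ 2 - C ((d:ℤ):ℚ) with hp
  have hmonic : p.Monic := monic_X_pow_sub_C _ (by norm_num)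
  have heval : Polynomial.aeval x p = 0 := by
    simp [hp, hx2]
  have hint : IsIntegral ℚ x := ⟨p, hmonic, heval⟩
  have hirrp : Irreducible p := by
    refine X_pow_sub_C_irreducible_of_prime Nat.prime_two ?_
    intro b hb
    exact hnsq ⟨b, by rw [← hb]; ring⟩
  have hmin : minpoly ℚ x = p :=
    (minpoly.eq_of_irreducible_of_monic hirrp heval hmonic).symm
  have hdeg : (minpoly ℚ x).natDegree = 2 := by
    rw [hmin, hp, natDegree_X_pow_sub_C]
  have hfinrank : Module.finrank ℚ (ℚ⟮x⟯ : IntermediateField ℚ ℝ) = 2 := by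
    rw [IntermediateField.adjoin.finrank hint, hdeg]
  refine ⟨?_, hfinrank⟩
  have hcard_le : Fintype.card ((ℚ⟮x⟯ : IntermediateField ℚ ℝ) ≃ₐ[ℚ] (ℚ⟮x⟯ : IntermediateField ℚ ℝ))
      ≤ Module.finrank ℚ (ℚ⟮x⟯ : IntermediateField ℚ ℝ) := by
    calc Fintype.card ((ℚ⟮x⟯ : IntermediateField ℚ ℝ) ≃ₐ[ℚ] (ℚ⟮x⟯ : IntermediateField ℚ ℝ))
        ≤ Fintype.card ((ℚ⟮x⟯ : IntermediateField ℚ ℝ) →ₐ[ℚ] (ℚ⟮x⟯ : IntermediateField ℚ ℝ)) :=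
          Fintype.card_le_of_injective _ (AlgEquiv.coe_algHom_injective)
      _ ≤ Module.finrank (ℚ⟮x⟯ : IntermediateField ℚ ℝ)
            ((ℚ⟮x⟯ : IntermediateField ℚ ℝ) →ₗ[ℚ] (ℚ⟮x⟯ : IntermediateField ℚ ℝ)) :=
          finrank_algHom ℚ (ℚ⟮x⟯ : IntermediateField ℚ ℝ)
      _ = Module.finrank ℚ (ℚ⟮x⟯ : IntermediateField ℚ ℝ) := Module.finrank_linearMap_self ℚ _ _
  have hrs : (AlgEquiv.refl : (ℚ⟮x⟯ : IntermediateField ℚ ℝ) ≃ₐ[ℚ] (ℚ⟮x⟯ : IntermediateField ℚ ℝ)) ≠ σ :=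
    fun h => hσ h.symm
  have hcard_ge : 2 ≤ Fintype.card ((ℚ⟮x⟯ : IntermediateField ℚ ℝ) ≃ₐ[ℚ] (ℚ⟮x⟯ : IntermediateField ℚ ℝ)) := by
    rw [← Finset.card_pair hrs]
    exact Finset.card_le_univ _
  exact IsGalois.of_card_aut_eq_finrank ℚ _ (by rw [Nat.card_eq_fintype_card]; exact le_antisymm hcard_le (hfinrank ▸ hcard_ge))

set_option synthInstance.maxHeartbeats 1000000 in
set_option maxHeartbeats 2000000 in
/-- Let `k = ℚ(√d)` have fundamental unit `ε` of norm `+1` and let `α` be the totally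
positive integer with `ε = σ(α)/α` and `m = Norm(α)` squarefree dividing the discriminant.
Then the product of the classes of the ramified primes dividing `m` (i.e. the class of the
ideal `J` with `J² = (m)`) is trivial in the strict class group of `k`: such a `J` is
principal with a totally positive generator. -/
theorem ramified_primes_dividing_m_strictly_principal
    (d : ℤ) (hd1 : 1 < d) (hdsf : Squarefree d)
    (K : IntermediateField ℚ ℝ) (hK : K = ℚ⟮(Real.sqrt (d : ℝ))⟯) [NumberField K]
    (σ : K ≃ₐ[ℚ] K) (hσ : σ ≠ AlgEquiv.refl)
    (ε : (𝓞 K)ˣ)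
    (hfund : ∀ u : (𝓞 K)ˣ, ∃ n : ℤ, u = ε ^ n ∨ u = -ε ^ n)
    (hnorm : Algebra.norm ℤ (ε : 𝓞 K) = 1)
    (α : 𝓞 K)
    (htotpos : ∀ φ : K →+* ℝ, 0 < φ (α : K))
    (hHilbert90 : ((ε : 𝓞 K) : K) * (α : K) = σ (α : K))
    (m : ℤ) (hm : Algebra.norm ℤ α = m) (hmsf : Squarefree m)
    (hmD : m ∣ NumberField.discr K)
    (J : Ideal (𝓞 K)) (hJ : J ^ 2 = Ideal.span {(m : 𝓞 K)}) :
    ∃ β : 𝓞 K, J = Ideal.span {β} ∧ ∀ φ : K →+* ℝ, 0 < φ (β : K) := by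
  classical
  subst hK
  have hirrx : Irrational (Real.sqrt (d : ℝ)) := by
    refine (irrational_sqrt_intCast_iff_of_nonneg (by linarith)).mpr ?_
    rintro ⟨r, rfl⟩
    have : IsUnit r := hdsf r (dvd_refl _)
    rcases Int.isUnit_iff.mp this with rfl | rfl <;> simp_all
  obtain ⟨hGalois, hfinrank⟩ := my_quadratic_galois d (Real.sqrt (d : ℝ))
    (Real.sq_sqrt (by positivity)) hirrx σ hσ
  haveI := hGalois
  -- The automorphism group is `{1, σ}`.
  have hrs : (AlgEquiv.refl :
      (ℚ⟮(Real.sqrt (d : ℝ))⟯ : IntermediateField ℚ ℝ) ≃ₐ[ℚ] ℚ⟮(Real.sqrt (d : ℝ))⟯) ≠ σ :=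
    fun h => hσ h.symm
  have hcard : Fintype.card
      ((ℚ⟮(Real.sqrt (d : ℝ))⟯ : IntermediateField ℚ ℝ) ≃ₐ[ℚ] ℚ⟮(Real.sqrt (d : ℝ))⟯) = 2 :=
    (Nat.card_eq_fintype_card.symm.trans (IsGalois.card_aut_eq_finrank ℚ _)).trans hfinrank
  have huniv : (Finset.univ : Finset
      ((ℚ⟮(Real.sqrt (d : ℝ))⟯ : IntermediateField ℚ ℝ) ≃ₐ[ℚ] ℚ⟮(Real.sqrt (d : ℝ))⟯))
      = {AlgEquiv.refl, σ} :=
    (Finset.eq_univ_of_card _ ((Finset.card_pair hrs).trans hcard.symm)).symm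
  -- The norm of α is α·σ(α).
  have hNm : ((m : ℤ) : (ℚ⟮(Real.sqrt (d : ℝ))⟯ : IntermediateField ℚ ℝ))
      = (α : (ℚ⟮(Real.sqrt (d : ℝ))⟯ : IntermediateField ℚ ℝ)) * σ (α : _) := by
    have h1 : algebraMap ℚ (ℚ⟮(Real.sqrt (d : ℝ))⟯ : IntermediateField ℚ ℝ) ((m : ℤ) : ℚ)
        = ∏ τ : (ℚ⟮(Real.sqrt (d : ℝ))⟯ : IntermediateField ℚ ℝ) ≃ₐ[ℚ] ℚ⟮(Real.sqrt (d : ℝ))⟯,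
            τ (α : _) := by
      rw [show ((m : ℤ) : ℚ) = Algebra.norm ℚ
          ((α : (ℚ⟮(Real.sqrt (d : ℝ))⟯ : IntermediateField ℚ ℝ))) by
        rw [← Algebra.coe_norm_int, hm]]
      exact Algebra.norm_eq_prod_automorphisms ℚ _
    rw [show (((m : ℤ) : (ℚ⟮(Real.sqrt (d : ℝ))⟯ : IntermediateField ℚ ℝ)))
        = algebraMap ℚ (ℚ⟮(Real.sqrt (d : ℝ))⟯ : IntermediateField ℚ ℝ) ((m : ℤ) : ℚ) by
      push_cast; simp, h1, huniv, Finset.prod_pair hrs]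
    rfl
  -- Hence `m = α · (ε α)` in the ring of integers.
  have hm_eq : (m : 𝓞 (ℚ⟮(Real.sqrt (d : ℝ))⟯ : IntermediateField ℚ ℝ)) = α * ((ε : _) * α) := by
    apply NumberField.RingOfIntegers.coe_injective
    push_cast
    rw [map_intCast, hNm, ← hHilbert90]
  -- The ideal `(α)` squares to `(m)`.
  have hαsq : (Ideal.span {α}) ^ 2 = Ideal.span {(m : 𝓞 (ℚ⟮(Real.sqrt (d : ℝ))⟯ : IntermediateField ℚ ℝ))} := by
    have hassoc : Associated ((ε : 𝓞 (ℚ⟮(Real.sqrt (d : ℝ))⟯ : IntermediateField ℚ ℝ)) * α) α :=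
      ⟨ε⁻¹, by rw [mul_comm ((ε : 𝓞 (ℚ⟮(Real.sqrt (d : ℝ))⟯ : IntermediateField ℚ ℝ))) α, mul_assoc]; simp⟩
    rw [hm_eq, ← Ideal.span_singleton_mul_span_singleton, sq,
      Ideal.span_singleton_eq_span_singleton.mpr hassoc]
  -- square roots of ideals are unique in a Dedekind domain
  have hJα : J = Ideal.span {α} := by
    have h2 : J ^ 2 = (Ideal.span {α}) ^ 2 := by rw [hJ, hαsq]
    exact associated_iff_eq.mp (my_assoc_of_pow_eq_pow (two_ne_zero) J _ h2)
  exact ⟨α, hJα, htotpos⟩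
end
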